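/- arXiv:1103.2650 — 13 statements merged into one kernel-verified Lean document; each statement's English description precedes it below -/
import Mathlib

section
/- For all natural numbers n, m, r, the identity ∑_{k=0}^{n} C(m+k, k) · C(n+r−k, n−k) = C(n+m+r+1, n) holds. -/
open PowerSeries Finset

lemma key (n m r : ℕ) :
    ∑ ij ∈ Finset.HasAntidiagonal.antidiagonal n,
      Nat.choose (m + ij.1) m * Nat.choose (r + ij.2) r
    = Nat.choose (m + r + 1 + n) (m + r + 1) := by
  have h : (mk fun i => (Nat.choose (m + i) m : ℤ)) * (mk fun i => (Nat.choose (r + i) r : ℤ))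
      = (mk fun i => (Nat.choose (m + r + 1 + i) (m + r + 1) : ℤ)) := by
    rw [← mk_one_pow_eq_mk_choose_add, ← mk_one_pow_eq_mk_choose_add,
      ← mk_one_pow_eq_mk_choose_add, ← pow_add]
    ring_nf
  have := congrArg (PowerSeries.coeff (R := ℤ) n) h
  rw [coeff_mul] at this
  simp only [coeff_mk] at this
  exact_mod_cast this

theorem vandermonde_like (n m r : ℕ) :
    ∑ k ∈ Finset.range (n + 1),
      Nat.choose (m + k) k * Nat.choose (n + r - k) (n - k)
    = Nat.choose (n + m + r + 1) n := by
  have h := key n m r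
  rw [Finset.Nat.sum_antidiagonal_eq_sum_range_succ
    (fun i j => Nat.choose (m + i) m * Nat.choose (r + j) r)] at h
  calc ∑ k ∈ Finset.range (n + 1),
        Nat.choose (m + k) k * Nat.choose (n + r - k) (n - k)
      = ∑ k ∈ Finset.range (n + 1),
        Nat.choose (m + k) m * Nat.choose (r + (n - k)) r := by
        refine Finset.sum_congr rfl fun k hk => ?_
        have hk' : k ≤ n := Nat.lt_succ_iff.mp (Finset.mem_range.mp hk)
        have h1 : (m + k).choose k = (m + k).choose m := by
          have := Nat.choose_symm (Nat.le_add_right m k)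
          simpa using this
        have h2 : n + r - k = r + (n - k) := by omega
        have h3 : (r + (n - k)).choose (n - k) = (r + (n - k)).choose r := by
          have := Nat.choose_symm (Nat.le_add_right r (n - k))
          simpa using this
        rw [h1, h2, h3]
    _ = Nat.choose (m + r + 1 + n) (m + r + 1) := h
    _ = Nat.choose (n + m + r + 1) n := by
        have := Nat.choose_symm (show m + r + 1 ≤ n + m + r + 1 by omega)
        have he : n + m + r + 1 - (m + r + 1) = n := by omega
        rw [he] at this
        rw [this]
        congr 1
        omega
end

section
/- For all natural numbers n, m, r, the identity ∑_{k=0}^{n} ((m+1)/(m+k+1)) · C(m+2k, k) · C(2n+r−2k, n−k) = C(2n+m+r+1, n) holds, where both sides are interpreted as rational numbers. -/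
theorem combiwalk2 (n m r : ℕ) :
    ∑ k ∈ Finset.range (n + 1),
      ((m : ℚ) + 1) / ((m : ℚ) + k + 1) *
        (Nat.choose (m + 2 * k) k : ℚ) *
        (Nat.choose (2 * n + r - 2 * k) (n - k) : ℚ)
    = (Nat.choose (2 * n + m + r + 1) n : ℚ) := by
  induction n generalizing r with
  | zero =>
    simp only [Finset.range_one, Finset.sum_singleton, Nat.cast_zero, add_zero,
      Nat.mul_zero, Nat.sub_zero, Nat.choose_zero_right, Nat.cast_one, mul_one]
    simp
    exact (by positivity : ((m:ℚ) + 1) ≠ 0)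
  | succ n IH =>
    induction r with
    | zero =>
      rw [Finset.sum_range_succ]
      have h1 : ∑ k ∈ Finset.range (n + 1),
          ((m:ℚ) + 1) / ((m:ℚ) + k + 1) * ((m + 2 * k).choose k : ℚ) * ((2 * (n + 1) + 0 - 2 * k).choose (n + 1 - k) : ℚ)
          = ∑ k ∈ Finset.range (n + 1),
          2 * (((m:ℚ) + 1) / ((m:ℚ) + k + 1) * ((m + 2 * k).choose k : ℚ) * ((2 * n + 1 - 2 * k).choose (n - k) : ℚ)) := by
        refine Finset.sum_congr rfl fun k hk => ?_
        have hk' : k ≤ n := Nat.lt_succ_iff.mp (Finset.mem_range.mp hk)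
        have e1 : 2 * (n + 1) + 0 - 2 * k = 2 * (n - k) + 1 + 1 := by omega
        have e2 : n + 1 - k = (n - k) + 1 := by omega
        have e3 : 2 * n + 1 - 2 * k = 2 * (n - k) + 1 := by omega
        rw [e1, e2, e3, Nat.choose_succ_succ (2 * (n - k) + 1) (n - k), Nat.choose_symm_half]
        push_cast
        ring
      rw [h1, ← Finset.mul_sum, IH 1]
      have key : ((m + 2 * n + 2).choose (n + 1) : ℚ) * (n + 1) = ((m + 2 * n + 2).choose n : ℚ) * (m + n + 2) := by
        have h := Nat.choose_succ_right_eq (m + 2 * n + 2) n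
        have e : m + 2 * n + 2 - n = m + n + 2 := by omega
        rw [e] at h
        exact_mod_cast congrArg (Nat.cast : ℕ → ℚ) h
      rw [show 2 * (n + 1) + 0 - 2 * (n + 1) = 0 from by omega, Nat.sub_self,
        show m + 2 * (n + 1) = m + 2 * n + 2 from by omega,
        show 2 * n + m + 1 + 1 = m + 2 * n + 2 from by omega,
        show 2 * (n + 1) + m + 0 + 1 = m + 2 * n + 2 + 1 from by omega,
        Nat.choose_succ_succ (m + 2 * n + 2) n]
      have h0 : (m:ℚ) + ((n:ℚ) + 1) + 1 ≠ 0 := by positivity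
      push_cast at h0 ⊢
      field_simp
      ring_nf
      ring_nf at key
      rw [Nat.choose_self, Nat.cast_one]
      linarith [key]
    | succ r IHr =>
      rw [Finset.sum_range_succ] at IHr ⊢
      rw [show 2 * (n + 1) + (r + 1) - 2 * (n + 1) = r + 1 from by omega, Nat.sub_self,
        Nat.choose_zero_right]
      rw [show 2 * (n + 1) + r - 2 * (n + 1) = r from by omega, Nat.sub_self,
        Nat.choose_zero_right] at IHr
      have split : ∑ k ∈ Finset.range (n + 1),
          ((m:ℚ) + 1) / ((m:ℚ) + k + 1) * ((m + 2 * k).choose k : ℚ) * ((2 * (n + 1) + (r + 1) - 2 * k).choose (n + 1 - k) : ℚ)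
          = ∑ k ∈ Finset.range (n + 1),
          (((m:ℚ) + 1) / ((m:ℚ) + k + 1) * ((m + 2 * k).choose k : ℚ) * ((2 * n + (r + 2) - 2 * k).choose (n - k) : ℚ)
            + ((m:ℚ) + 1) / ((m:ℚ) + k + 1) * ((m + 2 * k).choose k : ℚ) * ((2 * (n + 1) + r - 2 * k).choose (n + 1 - k) : ℚ)) := by
        refine Finset.sum_congr rfl fun k hk => ?_
        have hk' : k ≤ n := Nat.lt_succ_iff.mp (Finset.mem_range.mp hk)
        have hc : ((2 * (n + 1) + (r + 1) - 2 * k).choose (n + 1 - k))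
            = (2 * n + (r + 2) - 2 * k).choose (n - k) + (2 * (n + 1) + r - 2 * k).choose (n + 1 - k) := by
          rw [show 2 * (n + 1) + (r + 1) - 2 * k = (2 * n + (r + 2) - 2 * k) + 1 from by omega,
            show n + 1 - k = (n - k) + 1 from by omega,
            Nat.choose_succ_succ (2 * n + (r + 2) - 2 * k) (n - k),
            show 2 * (n + 1) + r - 2 * k = 2 * n + (r + 2) - 2 * k from by omega]
        rw [hc]
        push_cast
        ring
      rw [split, Finset.sum_add_distrib, IH (r + 2)]
      rw [show 2 * (n + 1) + m + (r + 1) + 1 = (2 * n + m + (r + 2) + 1) + 1 from by omega,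
        Nat.choose_succ_succ (2 * n + m + (r + 2) + 1) n]
      rw [show 2 * (n + 1) + m + r + 1 = 2 * n + m + (r + 2) + 1 from by omega] at IHr
      push_cast at IHr ⊢
      linarith [IHr]
end

section
/- For all natural numbers n, m, r, the identity ∑_{k=0}^{n} ((r+1)/(n+r−k+1)) · C(m+2k, k) · C(2n+r−2k, n−k) = C(2n+m+r+1, n) holds, where both sides are interpreted as rational numbers. -/
open Finset

noncomputable def aQ (j r : ℕ) : ℚ :=
  ((r : ℚ) + 1) / ((j : ℚ) + r + 1) * (Nat.choose (2 * j + r) j : ℚ)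

lemma aQ_zero (r : ℕ) : aQ 0 r = 1 := by
  have h : ((r : ℚ) + 1) ≠ 0 := by positivity
  simp [aQ, div_self h]

lemma aQ_sub (j r : ℕ) :
    aQ (j + 1) r
      = (Nat.choose (2 * j + r + 2) (j + 1) : ℚ) - (Nat.choose (2 * j + r + 2) j : ℚ) := by
  have h := Nat.choose_succ_right_eq (2 * j + r + 2) j
  have h2 : 2 * j + r + 2 - j = j + r + 2 := by omega
  rw [h2] at h
  have hq : (Nat.choose (2 * j + r + 2) (j + 1) : ℚ) * ((j : ℚ) + 1)
      = (Nat.choose (2 * j + r + 2) j : ℚ) * ((j : ℚ) + r + 2) := by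
    exact_mod_cast congrArg (Nat.cast : ℕ → ℚ) h
  have hne : ((j : ℚ) + 1 + r + 1) ≠ 0 := by positivity
  unfold aQ
  have e : 2 * (j + 1) + r = 2 * j + r + 2 := by ring
  rw [e]
  push_cast
  field_simp
  linear_combination -hq

lemma aQ_rec (j r : ℕ) : aQ (j + 1) (r + 1) = aQ (j + 1) r + aQ j (r + 2) := by
  cases j with
  | zero =>
    have h1 := aQ_sub 0 (r + 1)
    have h2 := aQ_sub 0 r
    have h3 := aQ_zero (r + 2)
    norm_num [Nat.choose_one_right] at h1 h2 ⊢
    rw [h1, h2, h3]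
    push_cast
    ring
  | succ j =>
    have h1 := aQ_sub (j + 1) (r + 1)
    have h2 := aQ_sub (j + 1) r
    have h3 := aQ_sub j (r + 2)
    have e1 : 2 * (j + 1) + (r + 1) + 2 = (2 * j + r + 4) + 1 := by ring
    have e2 : 2 * (j + 1) + r + 2 = 2 * j + r + 4 := by ring
    have e3 : 2 * j + (r + 2) + 2 = 2 * j + r + 4 := by ring
    rw [e1] at h1; rw [e2] at h2; rw [e3] at h3
    rw [h1, h2, h3]
    have p1 : Nat.choose (2 * j + r + 4 + 1) (j + 2)
        = Nat.choose (2 * j + r + 4) (j + 1) + Nat.choose (2 * j + r + 4) (j + 2) :=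
      Nat.choose_succ_succ _ _
    have p2 : Nat.choose (2 * j + r + 4 + 1) (j + 1)
        = Nat.choose (2 * j + r + 4) j + Nat.choose (2 * j + r + 4) (j + 1) :=
      Nat.choose_succ_succ _ _
    push_cast [p1, p2]
    ring

lemma aQ_base (j : ℕ) : aQ (j + 1) 0 = aQ j 1 := by
  cases j with
  | zero =>
    have h1 := aQ_sub 0 0
    rw [h1, aQ_zero]
    norm_num
  | succ j =>
    have h1 := aQ_sub (j + 1) 0
    have h2 := aQ_sub j 1
    have e1 : 2 * (j + 1) + 0 + 2 = (2 * j + 3) + 1 := by ring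
    have e2 : 2 * j + 1 + 2 = 2 * j + 3 := by ring
    rw [e1] at h1; rw [e2] at h2
    rw [h1, h2]
    have p1 : Nat.choose (2 * j + 3 + 1) (j + 2)
        = Nat.choose (2 * j + 3) (j + 1) + Nat.choose (2 * j + 3) (j + 2) :=
      Nat.choose_succ_succ _ _
    have p2 : Nat.choose (2 * j + 3 + 1) (j + 1)
        = Nat.choose (2 * j + 3) j + Nat.choose (2 * j + 3) (j + 1) :=
      Nat.choose_succ_succ _ _
    have sym : Nat.choose (2 * j + 3) (j + 2) = Nat.choose (2 * j + 3) (j + 1) := by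
      have h := Nat.choose_symm (show j + 2 ≤ 2 * j + 3 by omega)
      have e : 2 * j + 3 - (j + 2) = j + 1 := by omega
      rw [e] at h
      omega
    push_cast [p1, p2, sym]
    ring

noncomputable def fQ (n m r : ℕ) : ℚ :=
  ∑ k ∈ range (n + 1), (Nat.choose (m + 2 * k) k : ℚ) * aQ (n - k) r

lemma fQ_rec (n m r : ℕ) : fQ (n + 1) m (r + 1) = fQ (n + 1) m r + fQ n m (r + 2) := by
  unfold fQ
  rw [Finset.sum_range_succ, Finset.sum_range_succ (f := fun k =>
    (Nat.choose (m + 2 * k) k : ℚ) * aQ (n + 1 - k) r)]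
  have h : ∀ k ∈ range (n + 1),
      (Nat.choose (m + 2 * k) k : ℚ) * aQ (n + 1 - k) (r + 1)
        = (Nat.choose (m + 2 * k) k : ℚ) * aQ (n + 1 - k) r
          + (Nat.choose (m + 2 * k) k : ℚ) * aQ (n - k) (r + 2) := by
    intro k hk
    have hk' : k ≤ n := by simpa [Nat.lt_succ_iff] using hk
    have e : n + 1 - k = (n - k) + 1 := by omega
    rw [e, aQ_rec]
    ring
  rw [Finset.sum_congr rfl h, Finset.sum_add_distrib]
  simp [aQ_zero]
  ring

lemma fQ_base (n m : ℕ) :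
    fQ (n + 1) m 0 = fQ n m 1 + (Nat.choose (m + 2 * (n + 1)) (n + 1) : ℚ) := by
  unfold fQ
  rw [Finset.sum_range_succ]
  have h : ∀ k ∈ range (n + 1),
      (Nat.choose (m + 2 * k) k : ℚ) * aQ (n + 1 - k) 0
        = (Nat.choose (m + 2 * k) k : ℚ) * aQ (n - k) 1 := by
    intro k hk
    have hk' : k ≤ n := by simpa [Nat.lt_succ_iff] using hk
    have e : n + 1 - k = (n - k) + 1 := by omega
    rw [e, aQ_base]
  rw [Finset.sum_congr rfl h]
  simp [aQ_zero]

lemma fQ_eq (n : ℕ) : ∀ r m, fQ n m r = (Nat.choose (2 * n + m + r + 1) n : ℚ) := by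
  induction n with
  | zero =>
    intro r m
    simp [fQ, aQ_zero]
  | succ n ih =>
    intro r m
    induction r with
    | zero =>
      rw [fQ_base, ih 1 m]
      have e2 : 2 * n + m + 1 + 1 = 2 * n + m + 2 := by ring
      have e3 : m + 2 * (n + 1) = 2 * n + m + 2 := by ring
      have e : 2 * (n + 1) + m + 0 + 1 = (2 * n + m + 2) + 1 := by ring
      rw [e2, e3, e]
      have p : Nat.choose ((2 * n + m + 2) + 1) (n + 1)
          = Nat.choose (2 * n + m + 2) n + Nat.choose (2 * n + m + 2) (n + 1) := by
        simpa [Nat.succ_eq_add_one] using Nat.choose_succ_succ (2 * n + m + 2) n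
      rw [p]
      push_cast
      ring
    | succ r ihr =>
      rw [fQ_rec, ihr, ih (r + 2) m]
      have e2 : 2 * (n + 1) + m + r + 1 = 2 * n + m + r + 3 := by ring
      have e3 : 2 * n + m + (r + 2) + 1 = 2 * n + m + r + 3 := by ring
      have e : 2 * (n + 1) + m + (r + 1) + 1 = (2 * n + m + r + 3) + 1 := by ring
      rw [e2, e3, e]
      have p : Nat.choose ((2 * n + m + r + 3) + 1) (n + 1)
          = Nat.choose (2 * n + m + r + 3) n + Nat.choose (2 * n + m + r + 3) (n + 1) := by
        simpa [Nat.succ_eq_add_one] using Nat.choose_succ_succ (2 * n + m + r + 3) n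
      rw [p]
      push_cast
      ring

theorem combiwalk3 (n m r : ℕ) :
    ∑ k ∈ Finset.range (n + 1),
      ((r : ℚ) + 1) / ((n : ℚ) + r - k + 1) *
        (Nat.choose (m + 2 * k) k : ℚ) *
        (Nat.choose (2 * n + r - 2 * k) (n - k) : ℚ)
    = (Nat.choose (2 * n + m + r + 1) n : ℚ) := by
  have h : ∀ k ∈ Finset.range (n + 1),
      ((r : ℚ) + 1) / ((n : ℚ) + r - k + 1) *
        (Nat.choose (m + 2 * k) k : ℚ) *
        (Nat.choose (2 * n + r - 2 * k) (n - k) : ℚ)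
      = (Nat.choose (m + 2 * k) k : ℚ) * aQ (n - k) r := by
    intro k hk
    have hk' : k ≤ n := by simpa [Nat.lt_succ_iff] using hk
    have e1 : 2 * n + r - 2 * k = 2 * (n - k) + r := by omega
    have e2 : ((n - k : ℕ) : ℚ) = (n : ℚ) - k := by
      push_cast [Nat.cast_sub hk']; ring
    rw [e1]
    unfold aQ
    rw [e2]
    ring
  rw [Finset.sum_congr rfl h]
  exact fQ_eq n r m
end

section
/- For all natural numbers n, m, r, the identity ∑_{k=0}^{n} ((m+1)(r+1)) / ((m+k+1)(n+r−k+1)) · C(m+2k, k) · C(2n+r−2k, n−k) = ((m+r+2)/(n+m+r+2)) · C(2n+m+r+1, n) holds, where both sides are interpreted as rational numbers. -/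
/-- Ballot numbers: `bb k m = C(m+2k, k) - C(m+2k, k-1)` with `bb 0 m = 1`. -/
def bb : ℕ → ℕ → ℚ
  | 0, _ => 1
  | (k+1), m => (Nat.choose (m + 2*k + 2) (k+1) : ℚ) - (Nat.choose (m + 2*k + 2) k : ℚ)

lemma bq (k m : ℕ) :
    bb k m = ((m : ℚ) + 1) / ((m : ℚ) + k + 1) * (Nat.choose (m + 2*k) k : ℚ) := by
  cases k with
  | zero =>
      simp [bb]
      rw [div_self]
      positivity
  | succ j =>
      have h := Nat.choose_succ_right_eq (m + 2*j + 2) j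
      have hsub : m + 2*j + 2 - j = m + j + 2 := by omega
      rw [hsub] at h
      have hq : ((m + 2*j + 2).choose (j+1) : ℚ) * (j+1)
          = ((m + 2*j + 2).choose j : ℚ) * (m + j + 2) := by exact_mod_cast h
      have harg : m + 2*(j+1) = m + 2*j + 2 := by ring
      rw [bb, harg]
      have hne : ((m : ℚ) + (j+1 : ℕ) + 1) ≠ 0 := by push_cast; positivity
      field_simp
      push_cast at hq
      ring_nf
      ring_nf at hq
      push_cast
      linarith [hq]

lemma R1 (k m : ℕ) : bb (k+1) (m+1) = bb (k+1) m + bb k (m+2) := by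
  cases k with
  | zero =>
      simp [bb, Nat.choose_one_right]
      push_cast
      ring
  | succ j =>
      show ((Nat.choose ((m+1) + 2*(j+1) + 2) (j+2) : ℚ) - (Nat.choose ((m+1) + 2*(j+1) + 2) (j+1) : ℚ))
        = ((Nat.choose (m + 2*(j+1) + 2) (j+2) : ℚ) - (Nat.choose (m + 2*(j+1) + 2) (j+1) : ℚ))
          + ((Nat.choose ((m+2) + 2*j + 2) (j+1) : ℚ) - (Nat.choose ((m+2) + 2*j + 2) j : ℚ))
      have e1 : (m+1) + 2*(j+1) + 2 = (m + 2*j + 4) + 1 := by ring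
      have e2 : m + 2*(j+1) + 2 = m + 2*j + 4 := by ring
      have e3 : (m+2) + 2*j + 2 = m + 2*j + 4 := by ring
      rw [e1, e2, e3]
      rw [show (j+2) = (j+1)+1 from rfl, Nat.choose_succ_succ (m + 2*j + 4) (j+1),
        Nat.choose_succ_succ (m + 2*j + 4) j]
      push_cast [Nat.choose_succ_succ]
      ring

lemma R2 (k : ℕ) : bb (k+1) 0 = bb k 1 := by
  cases k with
  | zero => norm_num [bb]
  | succ j =>
      show ((Nat.choose (0 + 2*(j+1) + 2) (j+2) : ℚ) - (Nat.choose (0 + 2*(j+1) + 2) (j+1) : ℚ))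
        = ((Nat.choose (1 + 2*j + 2) (j+1) : ℚ) - (Nat.choose (1 + 2*j + 2) j : ℚ))
      have e1 : 0 + 2*(j+1) + 2 = (2*j + 3) + 1 := by ring
      have e2 : 1 + 2*j + 2 = 2*j + 3 := by ring
      rw [e1, e2]
      rw [show (j+2) = (j+1)+1 from rfl, Nat.choose_succ_succ (2*j + 3) (j+1),
        Nat.choose_succ_succ (2*j + 3) j]
      have hsym : (2*j+3).choose (j+2) = (2*j+3).choose (j+1) := by
        rw [← Nat.choose_symm (by omega : j+2 ≤ 2*j+3)]
        congr 1
        omega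
      rw [hsym]
      push_cast
      ring

lemma Skey : ∀ n m r : ℕ,
    ∑ k ∈ Finset.range (n+1), bb k m * bb (n-k) r = bb n (m+r+1) := by
  intro n
  induction n with
  | zero => intro m r; simp [bb]
  | succ n ih =>
      intro m
      induction m with
      | zero =>
          intro r
          rw [Finset.sum_range_succ']
          have hterm : ∀ i ∈ Finset.range (n+1),
              bb (i+1) 0 * bb (n+1-(i+1)) r = bb i 1 * bb (n-i) r := by
            intro i _
            rw [R2, Nat.succ_sub_succ]
          rw [Finset.sum_congr rfl hterm, ih 1 r]
          show bb n (1 + r + 1) + bb 0 0 * bb (n+1-0) r = bb (n+1) (0 + r + 1)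
          have : bb 0 0 = 1 := rfl
          rw [this, one_mul]
          rw [show 1 + r + 1 = r + 2 from by ring, show 0 + r + 1 = r + 1 from by ring,
            show n + 1 - 0 = n + 1 from rfl]
          rw [R1 n r]
          ring
      | succ m ihm =>
          intro r
          rw [Finset.sum_range_succ']
          have hterm : ∀ i ∈ Finset.range (n+1),
              bb (i+1) (m+1) * bb (n+1-(i+1)) r
                = bb (i+1) m * bb (n-i) r + bb i (m+2) * bb (n-i) r := by
            intro i _
            rw [Nat.succ_sub_succ, R1]
            ring
          rw [Finset.sum_congr rfl hterm, Finset.sum_add_distrib, ih (m+2) r]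
          have hback : ∑ i ∈ Finset.range (n+1), bb (i+1) m * bb (n-i) r
              + bb 0 (m+1) * bb (n+1-0) r = bb (n+1) (m + r + 1) := by
            have h0 : bb 0 (m+1) = bb 0 m := rfl
            rw [h0]
            have := ihm r
            rw [Finset.sum_range_succ'] at this
            simp only [Nat.succ_sub_succ] at this
            convert this using 2
          have hfin : bb (n+1) ((m+1) + r + 1) = bb (n+1) (m+r+1) + bb n (m+2+r+1) := by
            rw [show (m+1) + r + 1 = (m+r+1) + 1 from by ring, R1,
              show m+r+1+2 = m+2+r+1 from by ring]
          rw [hfin]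
          linarith [hback]

theorem combiwalk4 (n m r : ℕ) :
    ∑ k ∈ Finset.range (n + 1),
      (((m : ℚ) + 1) * ((r : ℚ) + 1)) /
          (((m : ℚ) + k + 1) * ((n : ℚ) + r - k + 1)) *
        (Nat.choose (m + 2 * k) k : ℚ) *
        (Nat.choose (2 * n + r - 2 * k) (n - k) : ℚ)
    = ((m : ℚ) + r + 2) / ((n : ℚ) + m + r + 2) *
        (Nat.choose (2 * n + m + r + 1) n : ℚ) := by
  have hRHS : ((m : ℚ) + r + 2) / ((n : ℚ) + m + r + 2) *
      (Nat.choose (2 * n + m + r + 1) n : ℚ) = bb n (m + r + 1) := by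
    rw [bq n (m+r+1)]
    rw [show (m + r + 1) + 2*n = 2*n + m + r + 1 from by ring]
    push_cast
    ring_nf
  rw [hRHS, ← Skey n m r]
  apply Finset.sum_congr rfl
  intro k hk
  have hkn : k ≤ n := Nat.lt_succ_iff.mp (Finset.mem_range.mp hk)
  rw [bq k m, bq (n-k) r]
  have hcast : ((n - k : ℕ) : ℚ) = (n : ℚ) - k := by
    rw [Nat.cast_sub hkn]
  have harg : 2 * n + r - 2 * k = r + 2 * (n - k) := by omega
  rw [harg, hcast]
  have h1 : ((m : ℚ) + k + 1) ≠ 0 := by positivity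
  have h2 : ((r : ℚ) + ((n : ℚ) - k) + 1) ≠ 0 := by
    have : (k : ℚ) ≤ n := by exact_mod_cast hkn
    intro h; nlinarith
  have h3 : ((n : ℚ) + r - k + 1) ≠ 0 := by
    intro h; apply h2; linarith
  field_simp
  ring
end

section
/- For all natural numbers n and m, the identity ∑_{k=0}^{n} ((2k+1)² / ((n+k+1)(m+k+1))) · C(2m, m+k) · C(2n, n+k) = (1/(n+m+1)) · C(2n+2m, n+m) holds, where both sides are interpreted as rational numbers. -/
open Finset

lemma cw_key (n k : ℕ) (hk : k ≤ n) :
    (2 * (k:ℚ) + 1) / ((n:ℚ) + k + 1) * (Nat.choose (2*n) (n+k) : ℚ)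
      = (Nat.choose (2*n) (n+k) : ℚ) - (Nat.choose (2*n) (n+k+1) : ℚ) := by
  have h := Nat.choose_succ_right_eq (2*n) (n+k)
  have h2n : 2*n - (n+k) = n - k := by omega
  rw [h2n] at h
  have hc : ((Nat.choose (2*n) (n+k+1) : ℚ)) * ((n:ℚ)+k+1)
      = (Nat.choose (2*n) (n+k) : ℚ) * ((n:ℚ) - k) := by
    have := congrArg (Nat.cast : ℕ → ℚ) h
    push_cast [Nat.cast_sub hk] at this
    linarith [this]
  have hne : (n:ℚ)+k+1 ≠ 0 := by positivity
  field_simp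
  linarith [hc]

lemma cw_vand1 (n m : ℕ) :
    (∑ k ∈ range (n+m+1), Nat.choose (2*n) (n+k) * Nat.choose (2*m) (m+k))
    + ∑ k ∈ range (n+m+1), Nat.choose (2*n) (n+k+1) * Nat.choose (2*m) (m+k+1)
    = Nat.choose (2*n+2*m) (n+m) := by
  have hV := Nat.add_choose_eq (2*n) (2*m) (n+m)
  rw [Finset.Nat.sum_antidiagonal_eq_sum_range_succ_mk] at hV
  simp only [Nat.succ_eq_add_one] at hV
  have hsplit : (n+m+1) = n + (m+1) := by omega
  rw [hsplit, Finset.sum_range_add] at hV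
  have hp2 : ∑ k ∈ range (m+1),
      Nat.choose (2*n) (n+k) * Nat.choose (2*m) (n+m-(n+k))
      = ∑ k ∈ range (n+m+1), Nat.choose (2*n) (n+k) * Nat.choose (2*m) (m+k) := by
    calc ∑ k ∈ range (m+1), Nat.choose (2*n) (n+k) * Nat.choose (2*m) (n+m-(n+k))
        = ∑ k ∈ range (m+1), Nat.choose (2*n) (n+k) * Nat.choose (2*m) (m+k) := by
          apply Finset.sum_congr rfl
          intro k hk
          rw [Finset.mem_range] at hk
          have h2 : Nat.choose (2*m) (m+k) = Nat.choose (2*m) (n+m-(n+k)) := by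
            have := Nat.choose_symm (by omega : m+k ≤ 2*m)
            rw [(by omega : 2*m - (m+k) = n+m-(n+k))] at this
            exact this.symm
          rw [h2]
      _ = ∑ k ∈ range (n+m+1), Nat.choose (2*n) (n+k) * Nat.choose (2*m) (m+k) := by
          apply Finset.sum_subset (Finset.range_subset_range.2 (by omega : m+1 ≤ n+m+1))
          intro x hx hx'
          simp only [Finset.mem_range, not_lt] at hx'
          have : Nat.choose (2*m) (m+x) = 0 := Nat.choose_eq_zero_of_lt (by omega)
          simp [this]
  have hp1 : ∑ i ∈ range n,
      Nat.choose (2*n) i * Nat.choose (2*m) (n+m-i)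
      = ∑ k ∈ range (n+m+1), Nat.choose (2*n) (n+k+1) * Nat.choose (2*m) (m+k+1) := by
    rw [← Finset.sum_range_reflect]
    calc ∑ k ∈ range n, Nat.choose (2*n) (n-1-k) * Nat.choose (2*m) (n+m-(n-1-k))
        = ∑ k ∈ range n, Nat.choose (2*n) (n+k+1) * Nat.choose (2*m) (m+k+1) := by
          apply Finset.sum_congr rfl
          intro k hk
          rw [Finset.mem_range] at hk
          have h1 : Nat.choose (2*n) (n+k+1) = Nat.choose (2*n) (n-1-k) := by
            have := Nat.choose_symm (by omega : n+k+1 ≤ 2*n)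
            rw [(by omega : 2*n - (n+k+1) = n-1-k)] at this
            exact this.symm
          have h2 : n+m-(n-1-k) = m+k+1 := by omega
          rw [← h1, h2]
      _ = ∑ k ∈ range (n+m+1), Nat.choose (2*n) (n+k+1) * Nat.choose (2*m) (m+k+1) := by
          apply Finset.sum_subset (Finset.range_subset_range.2 (by omega : n ≤ n+m+1))
          intro x hx hx'
          simp only [Finset.mem_range, not_lt] at hx'
          have : Nat.choose (2*n) (n+x+1) = 0 := Nat.choose_eq_zero_of_lt (by omega)
          simp [this]
  rw [hp1, hp2] at hV
  omega

lemma cw_vand2 (n m : ℕ) :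
    (∑ k ∈ range (n+m+1), Nat.choose (2*n) (n+k) * Nat.choose (2*m) (m+k+1))
    + ∑ k ∈ range (n+m+1), Nat.choose (2*n) (n+k+1) * Nat.choose (2*m) (m+k)
    = Nat.choose (2*n+2*m) (n+m+1) := by
  have hV := Nat.add_choose_eq (2*n) (2*m) (n+m+1)
  rw [Finset.Nat.sum_antidiagonal_eq_sum_range_succ_mk] at hV
  simp only [Nat.succ_eq_add_one] at hV
  have hsplit : (n+m+1+1) = (n+1) + (m+1) := by omega
  rw [hsplit, Finset.sum_range_add] at hV
  have hp2 : ∑ k ∈ range (m+1),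
      Nat.choose (2*n) (n+1+k) * Nat.choose (2*m) (n+m+1-(n+1+k))
      = ∑ k ∈ range (n+m+1), Nat.choose (2*n) (n+k+1) * Nat.choose (2*m) (m+k) := by
    calc ∑ k ∈ range (m+1), Nat.choose (2*n) (n+1+k) * Nat.choose (2*m) (n+m+1-(n+1+k))
        = ∑ k ∈ range (m+1), Nat.choose (2*n) (n+k+1) * Nat.choose (2*m) (m+k) := by
          apply Finset.sum_congr rfl
          intro k hk
          rw [Finset.mem_range] at hk
          have h2 : Nat.choose (2*m) (m+k) = Nat.choose (2*m) (n+m+1-(n+1+k)) := by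
            have := Nat.choose_symm (by omega : m+k ≤ 2*m)
            rw [(by omega : 2*m - (m+k) = n+m+1-(n+1+k))] at this
            exact this.symm
          rw [← h2, (by omega : n+1+k = n+k+1)]
      _ = ∑ k ∈ range (n+m+1), Nat.choose (2*n) (n+k+1) * Nat.choose (2*m) (m+k) := by
          apply Finset.sum_subset (Finset.range_subset_range.2 (by omega : m+1 ≤ n+m+1))
          intro x hx hx'
          simp only [Finset.mem_range, not_lt] at hx'
          have : Nat.choose (2*m) (m+x) = 0 := Nat.choose_eq_zero_of_lt (by omega)
          simp [this]
  have hp1 : ∑ i ∈ range (n+1),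
      Nat.choose (2*n) i * Nat.choose (2*m) (n+m+1-i)
      = ∑ k ∈ range (n+m+1), Nat.choose (2*n) (n+k) * Nat.choose (2*m) (m+k+1) := by
    rw [← Finset.sum_range_reflect]
    calc ∑ k ∈ range (n+1), Nat.choose (2*n) (n+1-1-k) * Nat.choose (2*m) (n+m+1-(n+1-1-k))
        = ∑ k ∈ range (n+1), Nat.choose (2*n) (n+k) * Nat.choose (2*m) (m+k+1) := by
          apply Finset.sum_congr rfl
          intro k hk
          rw [Finset.mem_range] at hk
          have h1 : Nat.choose (2*n) (n+k) = Nat.choose (2*n) (n+1-1-k) := by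
            have := Nat.choose_symm (by omega : n+k ≤ 2*n)
            rw [(by omega : 2*n - (n+k) = n+1-1-k)] at this
            exact this.symm
          have h2 : n+m+1-(n+1-1-k) = m+k+1 := by omega
          rw [← h1, h2]
      _ = ∑ k ∈ range (n+m+1), Nat.choose (2*n) (n+k) * Nat.choose (2*m) (m+k+1) := by
          apply Finset.sum_subset (Finset.range_subset_range.2 (by omega : n+1 ≤ n+m+1))
          intro x hx hx'
          simp only [Finset.mem_range, not_lt] at hx'
          have : Nat.choose (2*n) (n+x) = 0 := Nat.choose_eq_zero_of_lt (by omega)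
          simp [this]
  rw [hp1, hp2] at hV
  omega

theorem combiwalk5 (n m : ℕ) :
    ∑ k ∈ Finset.range (n + 1),
      ((2 * (k : ℚ) + 1) ^ 2 / (((n : ℚ) + k + 1) * ((m : ℚ) + k + 1))) *
        (Nat.choose (2 * m) (m + k) : ℚ) *
        (Nat.choose (2 * n) (n + k) : ℚ)
    = 1 / ((n : ℚ) + m + 1) * (Nat.choose (2 * n + 2 * m) (n + m) : ℚ) := by
  have step1 : ∑ k ∈ Finset.range (n + 1),
      ((2 * (k : ℚ) + 1) ^ 2 / (((n : ℚ) + k + 1) * ((m : ℚ) + k + 1))) *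
        (Nat.choose (2 * m) (m + k) : ℚ) *
        (Nat.choose (2 * n) (n + k) : ℚ)
      = ∑ k ∈ Finset.range (n + 1),
        ((Nat.choose (2*n) (n+k) : ℚ) - (Nat.choose (2*n) (n+k+1) : ℚ)) *
        ((Nat.choose (2*m) (m+k) : ℚ) - (Nat.choose (2*m) (m+k+1) : ℚ)) := by
    apply Finset.sum_congr rfl
    intro k hk
    rw [Finset.mem_range] at hk
    by_cases hkm : k ≤ m
    · have h1 := cw_key n k (by omega)
      have h2 := cw_key m k hkm
      calc ((2 * (k : ℚ) + 1) ^ 2 / (((n : ℚ) + k + 1) * ((m : ℚ) + k + 1))) *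
            (Nat.choose (2 * m) (m + k) : ℚ) * (Nat.choose (2 * n) (n + k) : ℚ)
          = ((2 * (k:ℚ) + 1) / ((n:ℚ) + k + 1) * (Nat.choose (2*n) (n+k) : ℚ)) *
            ((2 * (k:ℚ) + 1) / ((m:ℚ) + k + 1) * (Nat.choose (2*m) (m+k) : ℚ)) := by
            have hne1 : (n:ℚ) + k + 1 ≠ 0 := by positivity
            have hne2 : (m:ℚ) + k + 1 ≠ 0 := by positivity
            field_simp
        _ = _ := by rw [h1, h2]
    · have hb1 : (Nat.choose (2*m) (m+k) : ℚ) = 0 := by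
        rw [Nat.choose_eq_zero_of_lt (by omega)]; norm_num
      have hb2 : (Nat.choose (2*m) (m+k+1) : ℚ) = 0 := by
        rw [Nat.choose_eq_zero_of_lt (by omega)]; norm_num
      rw [hb1, hb2]; ring
  rw [step1]
  have step2 : ∑ k ∈ Finset.range (n + 1),
        ((Nat.choose (2*n) (n+k) : ℚ) - (Nat.choose (2*n) (n+k+1) : ℚ)) *
        ((Nat.choose (2*m) (m+k) : ℚ) - (Nat.choose (2*m) (m+k+1) : ℚ))
      = ∑ k ∈ Finset.range (n+m+1),
        ((Nat.choose (2*n) (n+k) : ℚ) - (Nat.choose (2*n) (n+k+1) : ℚ)) *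
        ((Nat.choose (2*m) (m+k) : ℚ) - (Nat.choose (2*m) (m+k+1) : ℚ)) := by
    apply Finset.sum_subset (Finset.range_subset_range.2 (by omega : n+1 ≤ n+m+1))
    intro x hx hx'
    simp only [Finset.mem_range, not_lt] at hx'
    have ha1 : Nat.choose (2*n) (n+x) = 0 := Nat.choose_eq_zero_of_lt (by omega)
    have ha2 : Nat.choose (2*n) (n+x+1) = 0 := Nat.choose_eq_zero_of_lt (by omega)
    rw [ha1, ha2]; norm_num
  rw [step2]
  have expand : ∑ k ∈ Finset.range (n+m+1),
        ((Nat.choose (2*n) (n+k) : ℚ) - (Nat.choose (2*n) (n+k+1) : ℚ)) *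
        ((Nat.choose (2*m) (m+k) : ℚ) - (Nat.choose (2*m) (m+k+1) : ℚ))
      = ((∑ k ∈ Finset.range (n+m+1),
            (Nat.choose (2*n) (n+k) : ℚ) * (Nat.choose (2*m) (m+k) : ℚ))
          + ∑ k ∈ Finset.range (n+m+1),
            (Nat.choose (2*n) (n+k+1) : ℚ) * (Nat.choose (2*m) (m+k+1) : ℚ))
        - ((∑ k ∈ Finset.range (n+m+1),
            (Nat.choose (2*n) (n+k) : ℚ) * (Nat.choose (2*m) (m+k+1) : ℚ))
          + ∑ k ∈ Finset.range (n+m+1),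
            (Nat.choose (2*n) (n+k+1) : ℚ) * (Nat.choose (2*m) (m+k) : ℚ)) := by
    rw [← Finset.sum_add_distrib, ← Finset.sum_add_distrib, ← Finset.sum_sub_distrib]
    apply Finset.sum_congr rfl
    intro k _
    ring
  rw [expand]
  have v1 := congrArg (Nat.cast : ℕ → ℚ) (cw_vand1 n m)
  have v2 := congrArg (Nat.cast : ℕ → ℚ) (cw_vand2 n m)
  push_cast at v1 v2
  have hr := cw_key (n+m) 0 (Nat.zero_le _)
  rw [(by ring : 2*(n+m) = 2*n+2*m)] at hr
  push_cast at hr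
  norm_num at hr
  rw [v1, v2, one_div]
  linarith [hr]
end

section
/- For all natural numbers n and m, the identity ∑_{k=0}^{n} ((k+1)(k+2)/(m+k+2)) · C(2m+k+1, m) · C(2n−k, n) = ((n+1)/(n+m+2)) · C(2n+2m+2, n+m+1) holds, where both sides are interpreted as rational numbers. -/
open Nat Finset

noncomputable def Fq (n m k : ℕ) : ℚ :=
  (((k : ℚ) + 1) * ((k : ℚ) + 2) / ((m : ℚ) + k + 2)) *
    (Nat.choose (2 * m + k + 1) m : ℚ) * (Nat.choose (2 * n - k) n : ℚ)

noncomputable def Gq (n m k : ℕ) : ℚ :=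
  (k : ℚ) * ((k : ℚ) - (2 * (n : ℚ) + 1)) / ((m : ℚ) + 1) * Fq n m k

noncomputable def Tq (n m : ℕ) : ℚ :=
  ((n : ℚ) + 1) / ((n : ℚ) + m + 2) *
    (Nat.choose (2 * n + 2 * m + 2) (n + m + 1) : ℚ)

noncomputable def Hq (n k : ℕ) : ℚ :=
  ((n : ℚ) + 1) * ((k : ℚ) + 2) / ((n : ℚ) + 2) * (Nat.choose (2 * n + 1 - k) (n + 1) : ℚ)

lemma fne (a : ℕ) : ((a ! : ℕ) : ℚ) ≠ 0 := by
  exact_mod_cast a.factorial_pos.ne'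

lemma Gq_zero (n m : ℕ) : Gq n m 0 = 0 := by simp [Gq]

lemma Gq_top (n m : ℕ) : Gq n m (n + 1) = 0 := by
  cases n with
  | zero => norm_num [Gq, Fq]
  | succ p =>
      have h : 2 * (p + 1) - (p + 1 + 1) = p := by omega
      simp [Gq, Fq, h, Nat.choose_eq_zero_of_lt (Nat.lt_succ_self p)]

lemma chooseC3 (m k : ℕ) :
    (Nat.choose (2 * m + k + 2) m : ℚ)
      = (Nat.choose (2 * m + k + 1) m : ℚ) * (2 * (m : ℚ) + k + 2) / ((m : ℚ) + k + 2) := by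
  have h := Nat.choose_mul_succ_eq (2 * m + k + 1) m
  rw [show 2 * m + k + 1 + 1 = 2 * m + k + 2 by ring,
      show 2 * m + k + 2 - m = m + k + 2 by omega] at h
  have h' : (Nat.choose (2 * m + k + 1) m : ℚ) * (2 * (m : ℚ) + k + 2)
      = (Nat.choose (2 * m + k + 2) m : ℚ) * ((m : ℚ) + k + 2) := by exact_mod_cast h
  have d : ((m : ℚ) + k + 2) ≠ 0 := by positivity
  rw [eq_div_iff d]
  linear_combination -h'

lemma chooseC2 (m k : ℕ) :
    (Nat.choose (2 * m + k + 3) (m + 1) : ℚ)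
      = (Nat.choose (2 * m + k + 2) m : ℚ) * (2 * (m : ℚ) + k + 3) / ((m : ℚ) + 1) := by
  have h := Nat.add_one_mul_choose_eq (2 * m + k + 2) m
  rw [show 2 * m + k + 2 + 1 = 2 * m + k + 3 by ring] at h
  have h' : (2 * (m : ℚ) + k + 3) * (Nat.choose (2 * m + k + 2) m : ℚ)
      = (Nat.choose (2 * m + k + 3) (m + 1) : ℚ) * ((m : ℚ) + 1) := by exact_mod_cast h
  have d : ((m : ℚ) + 1) ≠ 0 := by positivity
  rw [eq_div_iff d]
  linear_combination -h'

lemma chooseD2 (j k : ℕ) :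
    (Nat.choose (k + 2 * j + 1) (k + j + 1) : ℚ)
      = (Nat.choose (k + 2 * j + 2) (k + j + 1) : ℚ) * ((j : ℚ) + 1)
          / ((k : ℚ) + 2 * (j : ℚ) + 2) := by
  have h := Nat.choose_mul_succ_eq (k + 2 * j + 1) (k + j + 1)
  rw [show k + 2 * j + 1 + 1 = k + 2 * j + 2 by ring,
      show k + 2 * j + 2 - (k + j + 1) = j + 1 by omega] at h
  have h' : (Nat.choose (k + 2 * j + 1) (k + j + 1) : ℚ) * ((k : ℚ) + 2 * (j : ℚ) + 2)
      = (Nat.choose (k + 2 * j + 2) (k + j + 1) : ℚ) * ((j : ℚ) + 1) := by exact_mod_cast h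
  have d : ((k : ℚ) + 2 * (j : ℚ) + 2) ≠ 0 := by positivity
  rw [eq_div_iff d]
  linear_combination h'

lemma cert (n m k : ℕ) (hk : k ≤ n) :
    ((n : ℚ) + m + 3) * Fq n (m + 1) k
      - 2 * (2 * (n : ℚ) + 2 * (m : ℚ) + 3) * Fq n m k
      = Gq n m (k + 1) - Gq n m k := by
  rcases Nat.lt_or_ge k n with h | h
  · obtain ⟨j, rfl⟩ : ∃ j, n = k + j + 1 := ⟨n - k - 1, by omega⟩
    simp only [Fq, Gq]
    rw [show 2 * (m + 1) + k + 1 = 2 * m + k + 3 by ring,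
        show 2 * (k + j + 1) - k = k + 2 * j + 2 by omega,
        show 2 * (k + j + 1) - (k + 1) = k + 2 * j + 1 by omega,
        show 2 * m + (k + 1) + 1 = 2 * m + k + 2 by ring]
    rw [chooseC2 m k, chooseC3 m k, chooseD2 j k]
    have d1 : ((m : ℚ) + k + 2) ≠ 0 := by positivity
    have d2 : ((m : ℚ) + k + 3) ≠ 0 := by positivity
    have d3 : ((m : ℚ) + 1) ≠ 0 := by positivity
    have d4 : ((k : ℚ) + 2 * (j : ℚ) + 2) ≠ 0 := by positivity
    push_cast
    field_simp
    ring
  · have hkn : k = n := le_antisymm hk h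
    subst hkn
    rw [Gq_top]
    simp only [Fq, Gq]
    rw [show 2 * (m + 1) + k + 1 = 2 * m + k + 3 by ring,
        show 2 * k - k = k by omega, Nat.choose_self]
    rw [chooseC2 m k, chooseC3 m k]
    have d1 : ((m : ℚ) + k + 2) ≠ 0 := by positivity
    have d2 : ((m : ℚ) + k + 3) ≠ 0 := by positivity
    have d3 : ((m : ℚ) + 1) ≠ 0 := by positivity
    push_cast
    field_simp
    ring

lemma step (n m : ℕ) :
    ((n : ℚ) + m + 3) * (∑ k ∈ Finset.range (n + 1), Fq n (m + 1) k)
      = 2 * (2 * (n : ℚ) + 2 * (m : ℚ) + 3) * ∑ k ∈ Finset.range (n + 1), Fq n m k := by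
  have h : ∑ k ∈ Finset.range (n + 1),
      (((n : ℚ) + m + 3) * Fq n (m + 1) k
        - 2 * (2 * (n : ℚ) + 2 * (m : ℚ) + 3) * Fq n m k)
      = ∑ k ∈ Finset.range (n + 1), (Gq n m (k + 1) - Gq n m k) :=
    Finset.sum_congr rfl fun k hk => cert n m k (by
      have := Finset.mem_range.mp hk; omega)
  rw [Finset.sum_range_sub (Gq n m), Gq_top, Gq_zero] at h
  rw [Finset.sum_sub_distrib, ← Finset.mul_sum, ← Finset.mul_sum] at h
  linarith

lemma Trec (n m : ℕ) :
    ((n : ℚ) + m + 3) * Tq n (m + 1) = 2 * (2 * (n : ℚ) + 2 * (m : ℚ) + 3) * Tq n m := by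
  simp only [Tq]
  rw [show 2 * n + 2 * (m + 1) + 2 = 2 * n + 2 * m + 2 + 1 + 1 by ring,
      show n + (m + 1) + 1 = n + m + 1 + 1 by ring]
  rw [Nat.cast_choose ℚ (show n + m + 1 + 1 ≤ 2 * n + 2 * m + 2 + 1 + 1 by omega),
      Nat.cast_choose ℚ (show n + m + 1 ≤ 2 * n + 2 * m + 2 by omega)]
  rw [show 2 * n + 2 * m + 2 + 1 + 1 - (n + m + 1 + 1) = n + m + 1 + 1 by omega,
      show 2 * n + 2 * m + 2 - (n + m + 1) = n + m + 1 by omega]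
  rw [show 2 * n + 2 * m + 2 = 2 * n + 2 * m + 1 + 1 by ring,
      show n + m + 1 = n + m + 1 by rfl]
  simp only [Nat.factorial_succ]
  have h1 : (((n + m) ! : ℕ) : ℚ) ≠ 0 := fne (n + m)
  have h2 : (((2 * n + 2 * m) ! : ℕ) : ℚ) ≠ 0 := fne (2 * n + 2 * m)
  have d1 : ((n : ℚ) + m + 2) ≠ 0 := by positivity
  have d2 : ((n : ℚ) + m + 3) ≠ 0 := by positivity
  push_cast
  field_simp
  ring

lemma baseCert (n k : ℕ) (hk : k ≤ n) :
    ((k : ℚ) + 1) * (Nat.choose (2 * n - k) n : ℚ) = Hq n k - Hq n (k + 1) := by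
  rcases Nat.lt_or_ge k n with h | h
  · obtain ⟨j, rfl⟩ : ∃ j, n = k + j + 1 := ⟨n - k - 1, by omega⟩
    simp only [Hq]
    rw [show 2 * (k + j + 1) - k = k + 2 * j + 2 by omega,
        show 2 * (k + j + 1) + 1 - k = k + 2 * j + 3 by omega,
        show 2 * (k + j + 1) + 1 - (k + 1) = k + 2 * j + 2 by omega]
    rw [Nat.cast_choose ℚ (show k + j + 1 ≤ k + 2 * j + 2 by omega),
        Nat.cast_choose ℚ (show k + j + 1 + 1 ≤ k + 2 * j + 3 by omega),
        Nat.cast_choose ℚ (show k + j + 1 + 1 ≤ k + 2 * j + 2 by omega)]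
    rw [show k + 2 * j + 2 - (k + j + 1) = j + 1 by omega,
        show k + 2 * j + 3 - (k + j + 1 + 1) = j + 1 by omega,
        show k + 2 * j + 2 - (k + j + 1 + 1) = j by omega]
    rw [show k + 2 * j + 3 = k + 2 * j + 1 + 1 + 1 by ring,
        show k + 2 * j + 2 = k + 2 * j + 1 + 1 by ring]
    simp only [Nat.factorial_succ]
    have h4 : ((j ! : ℕ) : ℚ) ≠ 0 := fne j
    have h5 : (((k + j) ! : ℕ) : ℚ) ≠ 0 := fne (k + j)
    have h6 : (((k + 2 * j) ! : ℕ) : ℚ) ≠ 0 := fne (k + 2 * j)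
    have d1 : ((k : ℚ) + (j : ℚ) + 3) ≠ 0 := by positivity
    have d2 : ((k : ℚ) + (j : ℚ) + 2) ≠ 0 := by positivity
    push_cast
    field_simp
    try ring
  · have hkn : k = n := le_antisymm hk h
    subst hkn
    simp only [Hq]
    rw [show 2 * k - k = k by omega, Nat.choose_self,
        show 2 * k + 1 - k = k + 1 by omega, Nat.choose_self,
        show 2 * k + 1 - (k + 1) = k by omega, Nat.choose_succ_self]
    have d1 : ((k : ℚ) + 2) ≠ 0 := by positivity
    push_cast
    field_simp
    try ring

lemma Hq_top (n : ℕ) : Hq n (n + 1) = 0 := by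
  simp [Hq, show 2 * n + 1 - (n + 1) = n by omega, Nat.choose_succ_self]

lemma base (n : ℕ) : ∑ k ∈ Finset.range (n + 1), Fq n 0 k = Tq n 0 := by
  have h1 : ∀ k ∈ Finset.range (n + 1),
      Fq n 0 k = Hq n k - Hq n (k + 1) := by
    intro k hk
    have hk' : k ≤ n := by have := Finset.mem_range.mp hk; omega
    have e : Fq n 0 k = ((k : ℚ) + 1) * (Nat.choose (2 * n - k) n : ℚ) := by
      have d : ((k : ℚ) + 2) ≠ 0 := by positivity
      simp only [Fq]
      norm_num
      try field_simp
      try ring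
      exact Or.inl trivial
    rw [e, baseCert n k hk']
  rw [Finset.sum_congr rfl h1, Finset.sum_range_sub' (Hq n), Hq_top, sub_zero]
  simp only [Hq, Tq]
  rw [Nat.sub_zero,
      show 2 * n + 2 * 0 + 2 = 2 * n + 1 + 1 by ring, show n + 0 + 1 = n + 1 by ring]
  rw [Nat.cast_choose ℚ (show n + 1 ≤ 2 * n + 1 by omega),
      Nat.cast_choose ℚ (show n + 1 ≤ 2 * n + 1 + 1 by omega)]
  rw [show 2 * n + 1 - (n + 1) = n by omega,
      show 2 * n + 1 + 1 - (n + 1) = n + 1 by omega]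
  simp only [Nat.factorial_succ]
  have h1 : ((n ! : ℕ) : ℚ) ≠ 0 := fne n
  have h2 : (((2 * n) ! : ℕ) : ℚ) ≠ 0 := fne (2 * n)
  have d1 : ((n : ℚ) + 2) ≠ 0 := by positivity
  push_cast
  field_simp
  ring

theorem combiwalk6 (n m : ℕ) :
    ∑ k ∈ Finset.range (n + 1),
      (((k : ℚ) + 1) * ((k : ℚ) + 2) / ((m : ℚ) + k + 2)) *
        (Nat.choose (2 * m + k + 1) m : ℚ) *
        (Nat.choose (2 * n - k) n : ℚ)
    = ((n : ℚ) + 1) / ((n : ℚ) + m + 2) *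
        (Nat.choose (2 * n + 2 * m + 2) (n + m + 1) : ℚ) := by
  have key : ∀ M : ℕ, ∑ k ∈ Finset.range (n + 1), Fq n M k = Tq n M := by
    intro M
    induction M with
    | zero => exact base n
    | succ p ih =>
        have h1 := step n p
        have h2 := Trec n p
        rw [ih] at h1
        have h3 : ((n : ℚ) + p + 3) ≠ 0 := by positivity
        exact mul_left_cancel₀ h3 (h1.trans h2.symm)
  have := key m
  simpa only [Fq, Tq] using this
end

section
/- For all natural numbers n and m, the identity ∑_{k=0}^{n} (((m+1)(m+5) + 3(m+2k+1)²) / ((m+k+1)(m+k+2)(m+k+3))) · C(m+2k, k) = (4/(n+m+3)) · C(2n+m+2, n) holds, where both sides are interpreted as rational numbers. -/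
theorem combiwalk7 (n m : ℕ) :
    ∑ k ∈ Finset.range (n + 1),
      ((((m : ℚ) + 1) * ((m : ℚ) + 5) + 3 * ((m : ℚ) + 2 * k + 1) ^ 2) /
          (((m : ℚ) + k + 1) * ((m : ℚ) + k + 2) * ((m : ℚ) + k + 3))) *
        (Nat.choose (m + 2 * k) k : ℚ)
    = 4 / ((n : ℚ) + m + 3) * (Nat.choose (2 * n + m + 2) n : ℚ) := by
  induction n with
  | zero =>
      norm_num [Finset.sum_range_one]
      have h1 : (0:ℚ) < (m:ℚ) + 1 := by positivity
      have h2 : (0:ℚ) < (m:ℚ) + 2 := by positivity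
      have h3 : (0:ℚ) < (m:ℚ) + 3 := by positivity
      field_simp
      ring
  | succ n ih =>
      rw [Finset.sum_range_succ, ih]
      have e1 : m + 2 * (n + 1) = 2 * n + m + 2 := by ring
      have e2 : 2 * (n + 1) + m + 2 = 2 * n + m + 4 := by ring
      rw [e1, e2]
      have hn1 : ((n:ℚ) + 1) ≠ 0 := by positivity
      have hd1 : ((n:ℚ) + m + 2) ≠ 0 := by positivity
      have hd2 : ((n:ℚ) + m + 3) ≠ 0 := by positivity
      have hd3 : ((n:ℚ) + m + 4) ≠ 0 := by positivity
      have hb : ((2 * n + m + 2).choose (n + 1) : ℚ)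
          = ((2 * n + m + 2).choose n : ℚ) * ((n:ℚ) + m + 2) / ((n:ℚ) + 1) := by
        have h := Nat.choose_succ_right_eq (2 * n + m + 2) n
        rw [show 2 * n + m + 2 - n = n + m + 2 from by omega] at h
        have h' := congrArg (Nat.cast : ℕ → ℚ) h
        push_cast at h'
        field_simp
        linarith [h']
      have hf1 : (((2 * n + m + 4).factorial : ℚ))
          = (2 * (n:ℚ) + m + 4) * (2 * (n:ℚ) + m + 3) * ((2 * n + m + 2).factorial : ℚ) := by
        rw [show 2 * n + m + 4 = (2 * n + m + 3) + 1 from by omega,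
            Nat.factorial_succ (2 * n + m + 3),
            show 2 * n + m + 3 = (2 * n + m + 2) + 1 from by omega,
            Nat.factorial_succ (2 * n + m + 2)]
        push_cast; ring
      have hf2 : (((n + m + 3).factorial : ℚ)) = ((n:ℚ) + m + 3) * ((n + m + 2).factorial : ℚ) := by
        rw [show n + m + 3 = (n + m + 2) + 1 from by omega, Nat.factorial_succ (n + m + 2)]
        push_cast; ring
      have hf3 : (((n + 1).factorial : ℚ)) = ((n:ℚ) + 1) * (n.factorial : ℚ) := by
        rw [Nat.factorial_succ n]; push_cast; ring
      have hc : ((2 * n + m + 4).choose (n + 1) : ℚ)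
          = ((2 * n + m + 2).choose n : ℚ) * ((2 * (n:ℚ) + m + 3) * (2 * (n:ℚ) + m + 4))
              / (((n:ℚ) + 1) * ((n:ℚ) + m + 3)) := by
        rw [Nat.cast_choose ℚ (show n + 1 ≤ 2 * n + m + 4 by omega),
            Nat.cast_choose ℚ (show n ≤ 2 * n + m + 2 by omega),
            show 2 * n + m + 4 - (n + 1) = n + m + 3 from by omega,
            show 2 * n + m + 2 - n = n + m + 2 from by omega,
            hf1, hf2, hf3]
        have f1 : ((2 * n + m + 2).factorial : ℚ) ≠ 0 := by positivity
        have f2 : ((n + m + 2).factorial : ℚ) ≠ 0 := by positivity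
        have f3 : ((n).factorial : ℚ) ≠ 0 := by positivity
        field_simp
      rw [hb, hc]
      push_cast
      field_simp
      ring
end

section
/- For all natural numbers n and m, the identity ∑_{k=0}^{n} (((m+1)(m+5) + (m+2k−1)(m+2k+1)) / ((m+k+1)(m+k+2)(m+k+3))) · 2^{−k} · C(m+2k, k) = (2^{1−n}/(n+m+3)) · C(2n+m+2, n) holds, where both sides are interpreted as rational numbers. -/
lemma chooseA (n m : ℕ) :
    (n + 1) * Nat.choose (m + 2 * n + 2) (n + 1)
      = (m + n + 2) * Nat.choose (m + 2 * n + 2) n := by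
  have h := Nat.choose_succ_right_eq (m + 2 * n + 2) n
  have e : m + 2 * n + 2 - n = m + n + 2 := by omega
  rw [e] at h
  calc (n + 1) * Nat.choose (m + 2 * n + 2) (n + 1)
      = Nat.choose (m + 2 * n + 2) (n + 1) * (n + 1) := by ring
    _ = Nat.choose (m + 2 * n + 2) n * (m + n + 2) := h
    _ = (m + n + 2) * Nat.choose (m + 2 * n + 2) n := by ring

lemma chooseB (n m : ℕ) :
    (m + n + 3) * Nat.choose (2 * n + m + 3) n
      = (2 * n + m + 3) * Nat.choose (2 * n + m + 2) n := by
  have h1 := Nat.add_one_mul_choose_eq (2 * n + m + 2) n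
  have h2 := Nat.choose_succ_right_eq (2 * n + m + 3) n
  have e : 2 * n + m + 3 - n = n + m + 3 := by omega
  rw [e] at h2
  rw [show 2 * n + m + 2 + 1 = 2 * n + m + 3 by omega] at h1
  calc (m + n + 3) * Nat.choose (2 * n + m + 3) n
      = Nat.choose (2 * n + m + 3) n * (n + m + 3) := by ring
    _ = Nat.choose (2 * n + m + 3) (n + 1) * (n + 1) := h2.symm
    _ = (2 * n + m + 3) * Nat.choose (2 * n + m + 2) n := h1.symm

lemma chooseC (n m : ℕ) :
    (n + 1) * Nat.choose (2 * n + m + 4) (n + 1)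
      = (2 * n + m + 4) * Nat.choose (2 * n + m + 3) n := by
  have h1 := Nat.add_one_mul_choose_eq (2 * n + m + 3) n
  rw [show 2 * n + m + 3 + 1 = 2 * n + m + 4 by omega] at h1
  calc (n + 1) * Nat.choose (2 * n + m + 4) (n + 1)
      = Nat.choose (2 * n + m + 4) (n + 1) * (n + 1) := by ring
    _ = (2 * n + m + 4) * Nat.choose (2 * n + m + 3) n := h1.symm

theorem combiwalk8 (n m : ℕ) :
    ∑ k ∈ Finset.range (n + 1),
      ((((m : ℚ) + 1) * ((m : ℚ) + 5) +
            ((m : ℚ) + 2 * k - 1) * ((m : ℚ) + 2 * k + 1)) /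
          (((m : ℚ) + k + 1) * ((m : ℚ) + k + 2) * ((m : ℚ) + k + 3))) *
        (2 : ℚ) ^ (-(k : ℤ)) *
        (Nat.choose (m + 2 * k) k : ℚ)
    = (2 : ℚ) ^ (1 - (n : ℤ)) / ((n : ℚ) + m + 3) *
        (Nat.choose (2 * n + m + 2) n : ℚ) := by
  induction n with
  | zero =>
      have hm1 : ((m : ℚ) + 1) ≠ 0 := by positivity
      have hm2 : ((m : ℚ) + 2) ≠ 0 := by positivity
      have hm3 : ((m : ℚ) + 3) ≠ 0 := by positivity
      norm_num [Finset.sum_range_one]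
      field_simp
      ring
  | succ n ih =>
      rw [Finset.sum_range_succ, ih]
      -- cast the choose identities to ℚ
      have hA : ((n : ℚ) + 1) * (Nat.choose (m + 2 * (n + 1)) (n + 1) : ℚ)
          = ((m : ℚ) + n + 2) * (Nat.choose (2 * n + m + 2) n : ℚ) := by
        have h := chooseA n m
        have e1 : m + 2 * (n + 1) = m + 2 * n + 2 := by ring
        have h' := congrArg (Nat.cast : ℕ → ℚ) h
        push_cast at h'
        rw [e1, show 2 * n + m + 2 = m + 2 * n + 2 by ring]
        linarith [h']
      have hC : ((n : ℚ) + 1) * ((m : ℚ) + n + 3) * (Nat.choose (2 * (n + 1) + m + 2) (n + 1) : ℚ)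
          = (2 * (n : ℚ) + m + 4) * (2 * (n : ℚ) + m + 3) * (Nat.choose (2 * n + m + 2) n : ℚ) := by
        have hB := chooseB n m
        have hCn := chooseC n m
        have e1 : 2 * (n + 1) + m + 2 = 2 * n + m + 4 := by ring
        rw [e1]
        have key : (n + 1) * ((m + n + 3) * Nat.choose (2 * n + m + 4) (n + 1))
            = (2 * n + m + 4) * ((2 * n + m + 3) * Nat.choose (2 * n + m + 2) n) := by
          calc (n + 1) * ((m + n + 3) * Nat.choose (2 * n + m + 4) (n + 1))
              = (m + n + 3) * ((n + 1) * Nat.choose (2 * n + m + 4) (n + 1)) := by ring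
            _ = (m + n + 3) * ((2 * n + m + 4) * Nat.choose (2 * n + m + 3) n) := by rw [hCn]
            _ = (2 * n + m + 4) * ((m + n + 3) * Nat.choose (2 * n + m + 3) n) := by ring
            _ = (2 * n + m + 4) * ((2 * n + m + 3) * Nat.choose (2 * n + m + 2) n) := by rw [hB]
        have := congrArg (Nat.cast : ℕ → ℚ) key
        push_cast at this
        linarith [this]
      -- powers of 2
      have h2pos : (2 : ℚ) ≠ 0 := by norm_num
      have hp1 : (2 : ℚ) ^ (1 - ((n : ℤ) + 1)) = (2 : ℚ) ^ (-(n : ℤ)) := by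
        congr 1; ring
      have hp2 : (2 : ℚ) ^ (1 - (n : ℤ)) = 2 * (2 : ℚ) ^ (-(n : ℤ)) := by
        rw [zpow_sub₀ h2pos, zpow_one]
        field_simp [zpow_neg]
        rw [zpow_neg, zpow_natCast, mul_inv_cancel₀ (by positivity)]
      have hp3 : (2 : ℚ) ^ (-((n : ℤ) + 1)) = (2 : ℚ) ^ (-(n : ℤ)) / 2 := by
        rw [show -((n : ℤ) + 1) = -(n : ℤ) - 1 by ring, zpow_sub₀ h2pos, zpow_one]
      push_cast
      rw [hp1, hp2, hp3]
      set x : ℚ := (2 : ℚ) ^ (-(n : ℤ)) with hx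
      have hxne : x ≠ 0 := by positivity
      set c : ℚ := (Nat.choose (2 * n + m + 2) n : ℚ) with hc
      set d : ℚ := (Nat.choose (m + 2 * (n + 1)) (n + 1) : ℚ) with hd
      set e : ℚ := (Nat.choose (2 * (n + 1) + m + 2) (n + 1) : ℚ) with he
      have h1 : ((m : ℚ) + (n + 1) + 1) ≠ 0 := by positivity
      have h2 : ((m : ℚ) + (n + 1) + 2) ≠ 0 := by positivity
      have h3 : ((m : ℚ) + (n + 1) + 3) ≠ 0 := by positivity
      have h4 : ((n : ℚ) + m + 3) ≠ 0 := by positivity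
      have h5 : ((n : ℚ) + 1 + m + 3) ≠ 0 := by positivity
      have h6 : ((n : ℚ) + 1) ≠ 0 := by positivity
      -- substitute d and e in terms of c
      have hd' : d = ((m : ℚ) + n + 2) * c / ((n : ℚ) + 1) := by
        field_simp
        linarith [hA]
      have he' : e = (2 * (n : ℚ) + m + 4) * (2 * (n : ℚ) + m + 3) * c
          / (((n : ℚ) + 1) * ((m : ℚ) + n + 3)) := by
        have h7 : ((m : ℚ) + n + 3) ≠ 0 := by positivity
        field_simp
        linarith [hC]
      rw [hd', he']
      have h7 : ((m : ℚ) + n + 3) ≠ 0 := by positivity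
      field_simp
      ring
end

section
/- For every natural number n, the identity ∑_{k=0}^{n} (3/(k+2)) · C(2k, k+1) = (2/(n+2)) · C(2n+1, n) − 1 holds, where both sides are interpreted as rational numbers. -/
theorem combiwalk7_special (n : ℕ) :
    ∑ k ∈ Finset.range (n + 1),
      (3 / ((k : ℚ) + 2)) * (Nat.choose (2 * k) (k + 1) : ℚ)
    = 2 / ((n : ℚ) + 2) * (Nat.choose (2 * n + 1) n : ℚ) - 1 := by
  induction n with
  | zero => simp
  | succ n ih =>
    rw [Finset.sum_range_succ, ih]
    have h1 : (Nat.choose (2 * (n + 1)) (n + 2)) * (n + 2) =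
        (2 * n + 2) * Nat.choose (2 * n + 1) n := by
      have := Nat.add_one_mul_choose_eq (2 * n + 1) (n + 1)
      simp only [Nat.succ_eq_add_one, show 2*n+1+1 = 2*n+2 by omega,
        show n+1+1 = n+2 by omega] at this
      have hsym : Nat.choose (2 * n + 1) (n + 1) = Nat.choose (2 * n + 1) n := by
        rw [← Nat.choose_symm (by omega)]
        congr 1; omega
      rw [hsym] at this
      rw [show 2 * (n + 1) = 2 * n + 2 by ring]
      omega
    have h2 : (Nat.choose (2 * (n + 1) + 1) (n + 1)) * (n + 1) * (n + 2) =
        (2 * n + 3) * (2 * n + 2) * Nat.choose (2 * n + 1) n := by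
      have := Nat.add_one_mul_choose_eq (2 * n + 2) n
      simp only [Nat.succ_eq_add_one, show 2*n+2+1 = 2*n+3 by omega] at this
      have hsym : Nat.choose (2 * n + 2) n = Nat.choose (2 * (n + 1)) (n + 2) := by
        rw [show 2 * (n + 1) = 2 * n + 2 by ring, ← Nat.choose_symm (by omega)]
        congr 1; omega
      rw [hsym] at this
      rw [show 2 * (n + 1) + 1 = 2 * n + 3 by ring]
      calc Nat.choose (2 * n + 3) (n + 1) * (n + 1) * (n + 2)
          = (2 * n + 3) * Nat.choose (2 * (n + 1)) (n + 2) * (n + 2) := by rw [← this]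
        _ = (2 * n + 3) * (Nat.choose (2 * (n + 1)) (n + 2) * (n + 2)) := by ring
        _ = (2 * n + 3) * (2 * n + 2) * Nat.choose (2 * n + 1) n := by rw [h1]; ring
    have q1 : ((Nat.choose (2 * (n + 1)) (n + 2) : ℚ)) * ((n : ℚ) + 2) =
        (2 * (n : ℚ) + 2) * (Nat.choose (2 * n + 1) n : ℚ) := by
      exact_mod_cast congrArg (Nat.cast : ℕ → ℚ) h1
    have q2 : ((Nat.choose (2 * (n + 1) + 1) (n + 1) : ℚ)) * ((n : ℚ) + 1) * ((n : ℚ) + 2) =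
        (2 * (n : ℚ) + 3) * (2 * (n : ℚ) + 2) * (Nat.choose (2 * n + 1) n : ℚ) := by
      exact_mod_cast congrArg (Nat.cast : ℕ → ℚ) h2
    have hn0 : ((n : ℚ) + 1) ≠ 0 := by positivity
    have hn2 : ((n : ℚ) + 2) ≠ 0 := by positivity
    have hn3 : ((n : ℚ) + 3) ≠ 0 := by positivity
    push_cast
    push_cast at q1 q2
    field_simp
    nlinarith [q1, q2, sq_nonneg ((n:ℚ)+1)]
end

section
/- For every natural number n, the identity ∑_{k=0}^{n} (4/(k+3)) · 2^{−k} · C(2k+1, k+2) = (2^{−n}/(n+3)) · C(2n+4, n+2) − 2 holds, where both sides are interpreted as rational numbers. -/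
lemma aux1 (n : ℕ) : 2 * ((2*n+3).choose (n+2)) = (2*n+4).choose (n+2) := by
  have hs : (2*n+3).choose (n+1) = (2*n+3).choose (n+2) := by
    have := Nat.choose_symm (n := 2*n+3) (k := n+2) (by omega)
    simpa [show 2*n+3-(n+2) = n+1 by omega] using this
  have hp : (2*n+4).choose (n+2) = (2*n+3).choose (n+1) + (2*n+3).choose (n+2) := by
    have := Nat.choose_succ_succ (2*n+3) (n+1)
    simpa [show 2*n+3+1 = 2*n+4 by omega] using this
  omega

lemma aux2 (n : ℕ) : 2 * (n+3) * ((2*n+3).choose (n+3)) = (n+1) * ((2*n+4).choose (n+2)) := by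
  have h1 := Nat.choose_succ_right_eq (2*n+3) (n+2)
  have h2 := aux1 n
  have h : 2*n+3-(n+2) = n+1 := by omega
  rw [h] at h1
  nlinarith [h1, h2]

lemma aux3 (n : ℕ) : (n+3) * ((2*n+6).choose (n+3)) = 2 * (2*n+5) * ((2*n+4).choose (n+2)) := by
  have h2 := Nat.succ_mul_centralBinom_succ (n+2)
  simp only [Nat.centralBinom] at h2
  convert h2 using 3 <;> omega

theorem combiwalk8_special (n : ℕ) :
    ∑ k ∈ Finset.range (n + 1),
      (4 / ((k : ℚ) + 3)) * (2 : ℚ) ^ (-(k : ℤ)) *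
        (Nat.choose (2 * k + 1) (k + 2) : ℚ)
    = (2 : ℚ) ^ (-(n : ℤ)) / ((n : ℚ) + 3) *
        (Nat.choose (2 * n + 4) (n + 2) : ℚ) - 2 := by
  induction n with
  | zero =>
    norm_num [Nat.choose]
  | succ n ih =>
    rw [Finset.sum_range_succ, ih]
    have hxs : (2 : ℚ) ^ (-((n+1:ℕ):ℤ)) = (2 : ℚ) ^ (-((n:ℕ):ℤ)) / 2 := by
      push_cast
      rw [neg_add, zpow_add₀ (by norm_num : (2:ℚ) ≠ 0)]
      norm_num
      ring
    set x : ℚ := (2 : ℚ) ^ (-((n:ℕ):ℤ)) with hxdef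
    set B : ℚ := ((2*n+4).choose (n+2) : ℚ) with hBdef
    have h3 : ((n:ℚ)+3) ≠ 0 := by positivity
    have h4 : ((n:ℚ)+4) ≠ 0 := by positivity
    have q2 : 2 * ((n:ℚ)+3) * ((2*n+3).choose (n+3) : ℚ) = ((n:ℚ)+1) * B := by
      rw [hBdef]
      exact_mod_cast aux2 n
    have q3 : ((n:ℚ)+3) * ((2*n+6).choose (n+3) : ℚ) = 2 * (2*(n:ℚ)+5) * B := by
      rw [hBdef]
      exact_mod_cast aux3 n
    have hc1 : ((2*n+3).choose (n+3) : ℚ) = ((n:ℚ)+1) * B / (2*((n:ℚ)+3)) := by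
      field_simp
      linarith [q2]
    have hc2 : ((2*n+6).choose (n+3) : ℚ) = 2*(2*(n:ℚ)+5) * B / ((n:ℚ)+3) := by
      field_simp
      linarith [q3]
    have e1 : 2 * (n+1) + 1 = 2*n+3 := by ring
    have e2 : (n+1) + 2 = n+3 := by ring
    have e3 : 2 * (n+1) + 4 = 2*n+6 := by ring
    rw [hxs, e1, e2, e3, hc1, hc2]
    push_cast
    field_simp
    ring
end

section
/- Let N be a natural number and let m, r be integers with 0 ≤ m ≤ r, N + m even, m ≤ N, and r ≤ (N+m)/2. Then the number of walks of length N from 0 to m that touch level r at least once equals C(N, (N+m)/2 − r). -/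
open Finset

def PS (N : ℕ) (s : Fin N → ℤ) (j : ℕ) : ℤ :=
  ∑ i ∈ Finset.univ.filter (fun i : Fin N => (i : ℕ) < j), s i

lemma PS_zero (N : ℕ) (s : Fin N → ℤ) : PS N s 0 = 0 := by simp [PS]

lemma PS_total (N : ℕ) (s : Fin N → ℤ) : PS N s N = ∑ i, s i := by
  unfold PS
  congr 1
  apply Finset.filter_true_of_mem
  intro i _; exact i.isLt

lemma PS_succ (N : ℕ) (s : Fin N → ℤ) (j : ℕ) (hj : j < N) :
    PS N s (j + 1) = PS N s j + s ⟨j, hj⟩ := by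
  unfold PS
  have h : Finset.univ.filter (fun i : Fin N => (i : ℕ) < j + 1)
      = insert (⟨j, hj⟩ : Fin N) (Finset.univ.filter (fun i : Fin N => (i : ℕ) < j)) := by
    ext i
    simp only [Finset.mem_filter, Finset.mem_insert, Finset.mem_univ, true_and, Fin.ext_iff]
    omega
  rw [h, Finset.sum_insert (by simp)]
  ring

lemma ivt (N : ℕ) (s : Fin N → ℤ) (hs : ∀ j, s j = -1 ∨ s j = 1)
    (r : ℤ) (h0 : 0 ≤ r) (hN : r ≤ PS N s N) : ∃ j ≤ N, PS N s j = r := by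
  by_contra h
  push_neg at h
  have key : ∀ j, j ≤ N → PS N s j < r := by
    intro j
    induction j with
    | zero =>
      intro hj
      have := h 0 hj
      have h0' := PS_zero N s
      omega
    | succ j ih =>
      intro hj
      have hjN : j < N := by omega
      have hstep := PS_succ N s j hjN
      have hle := ih (by omega)
      have hne := h (j + 1) hj
      rcases hs ⟨j, hjN⟩ with hv | hv <;> omega
  have := key N le_rfl
  omega

noncomputable def FT (N : ℕ) (s : Fin N → ℤ) (r : ℤ) : ℕ :=
  sInf {j | PS N s j = r}

lemma FT_spec (N : ℕ) (s : Fin N → ℤ) (r : ℤ) (h : ∃ j ≤ N, PS N s j = r) :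
    PS N s (FT N s r) = r := by
  obtain ⟨j, _, hj⟩ := h
  exact Nat.sInf_mem (⟨j, hj⟩ : {j | PS N s j = r}.Nonempty)

lemma FT_min (N : ℕ) (s : Fin N → ℤ) (r : ℤ) (k : ℕ) (hk : k < FT N s r) :
    PS N s k ≠ r := Nat.notMem_of_lt_sInf hk

lemma FT_le (N : ℕ) (s : Fin N → ℤ) (r : ℤ) (h : ∃ j ≤ N, PS N s j = r) :
    FT N s r ≤ N := by
  obtain ⟨j, hjN, hj⟩ := h
  exact le_trans (Nat.sInf_le hj) hjN

noncomputable def Rmap (N : ℕ) (r : ℤ) (s : Fin N → ℤ) : Fin N → ℤ :=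
  fun i => if (i : ℕ) < FT N s r then s i else - s i

lemma steps_Rmap (N : ℕ) (r : ℤ) (s : Fin N → ℤ) (hs : ∀ j, s j = -1 ∨ s j = 1) :
    ∀ j, Rmap N r s j = -1 ∨ Rmap N r s j = 1 := by
  intro j
  unfold Rmap
  split
  · exact hs j
  · rcases hs j with h | h <;> simp [h]

lemma PS_Rmap_le (N : ℕ) (r : ℤ) (s : Fin N → ℤ) (j : ℕ) (hj : j ≤ FT N s r) :
    PS N (Rmap N r s) j = PS N s j := by
  unfold PS
  apply Finset.sum_congr rfl
  intro i hi
  simp only [Finset.mem_filter] at hi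
  have : (i : ℕ) < FT N s r := lt_of_lt_of_le hi.2 hj
  simp [Rmap, this]

lemma PS_Rmap_ge (N : ℕ) (r : ℤ) (s : Fin N → ℤ) (j : ℕ) (hj : FT N s r ≤ j)
    (hFT : PS N s (FT N s r) = r) :
    PS N (Rmap N r s) j = 2 * r - PS N s j := by
  have key : PS N (Rmap N r s) j + PS N s j = 2 * r := by
    unfold PS
    rw [← Finset.sum_add_distrib]
    have h1 : ∑ i ∈ Finset.univ.filter (fun i : Fin N => (i : ℕ) < j),
        (Rmap N r s i + s i)
        = ∑ i ∈ Finset.univ.filter (fun i : Fin N => (i : ℕ) < j),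
          (if (i : ℕ) < FT N s r then 2 * s i else 0) := by
      apply Finset.sum_congr rfl
      intro i _
      unfold Rmap
      split <;> ring
    rw [h1, ← Finset.sum_filter, Finset.filter_filter]
    have h2 : Finset.univ.filter (fun i : Fin N => (i : ℕ) < j ∧ (i : ℕ) < FT N s r)
        = Finset.univ.filter (fun i : Fin N => (i : ℕ) < FT N s r) := by
      apply Finset.filter_congr
      intro i _
      constructor
      · exact fun h => h.2
      · exact fun h => ⟨lt_of_lt_of_le h hj, h⟩
    rw [h2, ← Finset.mul_sum]
    rw [show (∑ i ∈ Finset.univ.filter (fun i : Fin N => (i : ℕ) < FT N s r), s i) = r from hFT]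
  omega

lemma Rmap_touch (N : ℕ) (r : ℤ) (s : Fin N → ℤ) (h : ∃ j ≤ N, PS N s j = r) :
    ∃ j ≤ N, PS N (Rmap N r s) j = r :=
  ⟨FT N s r, FT_le N s r h, by rw [PS_Rmap_le N r s _ le_rfl]; exact FT_spec N s r h⟩

lemma FT_Rmap_eq (N : ℕ) (r : ℤ) (s : Fin N → ℤ) (h : ∃ j ≤ N, PS N s j = r) :
    FT N (Rmap N r s) r = FT N s r := by
  apply le_antisymm
  · apply Nat.sInf_le
    show PS N (Rmap N r s) (FT N s r) = r
    rw [PS_Rmap_le N r s _ le_rfl]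
    exact FT_spec N s r h
  · by_contra hlt
    push_neg at hlt
    have h1 := FT_min N s r _ hlt
    have h2 : PS N (Rmap N r s) (FT N (Rmap N r s) r) = r :=
      FT_spec N (Rmap N r s) r (Rmap_touch N r s h)
    rw [PS_Rmap_le N r s _ (le_of_lt hlt)] at h2
    exact h1 h2

lemma Rmap_Rmap (N : ℕ) (r : ℤ) (s : Fin N → ℤ) (h : ∃ j ≤ N, PS N s j = r) :
    Rmap N r (Rmap N r s) = s := by
  funext i
  unfold Rmap
  rw [show FT N (fun i => if (i:ℕ) < FT N s r then s i else -s i) r = FT N s r from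
    FT_Rmap_eq N r s h]
  split <;> simp

lemma sum_Rmap (N : ℕ) (r : ℤ) (s : Fin N → ℤ) (h : ∃ j ≤ N, PS N s j = r) :
    ∑ i, Rmap N r s i = 2 * r - ∑ i, s i := by
  rw [← PS_total, ← PS_total]
  exact PS_Rmap_ge N r s N (FT_le N s r h) (FT_spec N s r h)

lemma touch_of_sum (N : ℕ) (r M : ℤ) (s : Fin N → ℤ) (hs : ∀ j, s j = -1 ∨ s j = 1)
    (hsum : ∑ i, s i = M) (h0 : 0 ≤ r) (hM : r ≤ M) : ∃ j ≤ N, PS N s j = r := by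
  apply ivt N s hs r h0
  rw [PS_total]; omega

lemma refl_card (N : ℕ) (m r : ℤ) (hm0 : 0 ≤ m) (hmr : m ≤ r) :
    Nat.card {s : Fin N → ℤ // (∀ j, s j = -1 ∨ s j = 1) ∧ (∑ i, s i) = m ∧
        ∃ j ≤ N, PS N s j = r}
      = Nat.card {s : Fin N → ℤ // (∀ j, s j = -1 ∨ s j = 1) ∧ (∑ i, s i) = 2 * r - m} := by
  have hr0 : 0 ≤ r := le_trans hm0 hmr
  apply Nat.card_congr
  refine ⟨fun s => ⟨Rmap N r s.1, steps_Rmap N r s.1 s.2.1, ?_⟩,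
          fun s => ⟨Rmap N r s.1, steps_Rmap N r s.1 s.2.1, ?_, ?_⟩, ?_, ?_⟩
  · rw [sum_Rmap N r s.1 s.2.2.2, s.2.2.1]
  · have ht := touch_of_sum N r (2 * r - m) s.1 s.2.1 s.2.2 hr0 (by omega)
    rw [sum_Rmap N r s.1 ht, s.2.2]; ring
  · exact Rmap_touch N r s.1 (touch_of_sum N r (2 * r - m) s.1 s.2.1 s.2.2 hr0 (by omega))
  · intro s
    apply Subtype.ext
    exact Rmap_Rmap N r s.1 s.2.2.2
  · intro s
    apply Subtype.ext
    exact Rmap_Rmap N r s.1 (touch_of_sum N r (2 * r - m) s.1 s.2.1 s.2.2 hr0 (by omega))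

lemma sum_steps (N : ℕ) (s : Fin N → ℤ) (hs : ∀ j, s j = -1 ∨ s j = 1) :
    ∑ i, s i = (N : ℤ) - 2 * (Finset.univ.filter (fun i => s i = -1)).card := by
  have h := Finset.sum_filter_add_sum_filter_not Finset.univ (fun i => s i = -1) s
  have h1 : ∑ i ∈ Finset.univ.filter (fun i => s i = -1), s i
      = -(Finset.univ.filter (fun i => s i = -1)).card := by
    rw [Finset.sum_congr rfl (fun i hi => (Finset.mem_filter.mp hi).2)]
    simp [mul_comm]
  have h2 : ∑ i ∈ Finset.univ.filter (fun i => ¬ s i = -1), s i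
      = (Finset.univ.filter (fun i => ¬ s i = -1)).card := by
    have hall : ∀ i ∈ Finset.univ.filter (fun i => ¬ s i = -1), s i = 1 := by
      intro i hi
      rcases hs i with hv | hv
      · exact absurd hv (Finset.mem_filter.mp hi).2
      · exact hv
    rw [Finset.sum_congr rfl hall]
    simp
  have h3 : (Finset.univ.filter (fun i => s i = -1)).card
      + (Finset.univ.filter (fun i => ¬ s i = -1)).card = N := by
    rw [Finset.card_filter_add_card_filter_not]
    simp
  rw [← h, h1, h2]
  push_cast
  omega

lemma count_walks (N : ℕ) (M : ℤ) (k : ℕ) (hk : (N : ℤ) - 2 * k = M) :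
    Nat.card {s : Fin N → ℤ // (∀ j, s j = -1 ∨ s j = 1) ∧ (∑ i, s i) = M}
      = N.choose k := by
  have e : {s : Fin N → ℤ // (∀ j, s j = -1 ∨ s j = 1) ∧ (∑ i, s i) = M}
      ≃ {A : Finset (Fin N) // A.card = k} := by
    refine ⟨fun s => ⟨Finset.univ.filter (fun i => s.1 i = -1), ?_⟩,
            fun A => ⟨fun i => if i ∈ A.1 then -1 else 1, fun j => ?_, ?_⟩, ?_, ?_⟩
    · have := sum_steps N s.1 s.2.1
      rw [s.2.2] at this
      omega
    · show (if j ∈ A.1 then (-1 : ℤ) else 1) = -1 ∨ (if j ∈ A.1 then (-1 : ℤ) else 1) = 1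
      split <;> simp
    · show (∑ i : Fin N, if i ∈ A.1 then (-1 : ℤ) else 1) = M
      have hs : ∀ j : Fin N, (if j ∈ A.1 then (-1 : ℤ) else 1) = -1
          ∨ (if j ∈ A.1 then (-1 : ℤ) else 1) = 1 := fun j => by split <;> simp
      have := sum_steps N _ hs
      have hfil : Finset.univ.filter (fun i : Fin N => (if i ∈ A.1 then (-1 : ℤ) else 1) = -1)
          = A.1 := by
        ext i
        simp only [Finset.mem_filter, Finset.mem_univ, true_and]
        split <;> simp_all
      rw [hfil, A.2] at this
      omega
    · intro s
      apply Subtype.ext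
      funext i
      simp only [Finset.mem_filter, Finset.mem_univ, true_and]
      rcases s.2.1 i with hv | hv <;> simp [hv]
    · intro A
      apply Subtype.ext
      ext i
      simp only [Finset.mem_filter, Finset.mem_univ, true_and]
      split <;> simp_all
  rw [Nat.card_congr e, Nat.card_eq_fintype_card, Fintype.card_finset_len, Fintype.card_fin]

theorem walk_reflection (N : ℕ) (m r : ℤ) (hm0 : 0 ≤ m) (hmr : m ≤ r)
    (heven : Even ((N : ℤ) + m)) (hmN : m ≤ (N : ℤ))
    (hr : r ≤ ((N : ℤ) + m) / 2) :
    Nat.card {s : Fin N → ℤ //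
        (∀ j, s j = -1 ∨ s j = 1) ∧
        (∑ i, s i) = m ∧
        ∃ j ≤ N, (∑ i ∈ Finset.univ.filter (fun i : Fin N => (i : ℕ) < j), s i) = r}
      = Nat.choose N (((N : ℤ) + m) / 2 - r).toNat := by
  obtain ⟨t, ht⟩ := heven
  have hk : (N : ℤ) - 2 * ((((N : ℤ) + m) / 2 - r).toNat : ℤ) = 2 * r - m := by omega
  exact (refl_card N m r hm0 hmr).trans
    (count_walks N (2 * r - m) (((N : ℤ) + m) / 2 - r).toNat hk)
end

section
/- Let N be a natural number and m an integer with 0 ≤ m ≤ N and N + m even, and set μ = (N+m)/2. Then the number of walks of length N from 0 to m all of whose partial sums are ≥ 0 equals ((m+1)/(μ+1)) · C(N, μ), where this quotient is an equality of rational numbers with the cardinality cast to ℚ. -/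
open Finset

private def Wset (N : ℕ) (m : ℤ) : Type :=
  {s : Fin N → ℤ //
    (∀ j, s j = -1 ∨ s j = 1) ∧
    (∑ i, s i) = m ∧
    ∀ j ≤ N, 0 ≤ (∑ i ∈ Finset.univ.filter (fun i : Fin N => (i : ℕ) < j), s i)}

private instance (N : ℕ) (m : ℤ) : Finite (Wset N m) := by
  have h : ({-1, 1} : Set ℤ).Finite := (Set.finite_singleton 1).insert (-1)
  have := h.to_subtype
  apply Finite.of_injective (fun s : Wset N m =>
    (fun j => ⟨s.1 j, by rcases s.2.1 j with h | h <;> simp [h]⟩ :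
      Fin N → ({-1, 1} : Set ℤ)))
  intro a b hab
  exact Subtype.ext (funext fun j => congrArg Subtype.val (congrFun hab j))

private lemma filter_ge (N : ℕ) {j : ℕ} (hj : N ≤ j) :
    Finset.univ.filter (fun i : Fin N => (i : ℕ) < j) = Finset.univ :=
  Finset.filter_true_of_mem (fun i _ => lt_of_lt_of_le i.is_lt hj)

private lemma sum_init {N : ℕ} (s : Fin (N+1) → ℤ) :
    (∑ i, Fin.init s i) = (∑ i, s i) - s (Fin.last N) := by
  rw [Fin.sum_univ_castSucc s]
  simp [Fin.init]

private lemma partial_snoc {N : ℕ} (t : Fin N → ℤ) (a : ℤ) {j : ℕ} (hj : j ≤ N) :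
    (∑ i ∈ Finset.univ.filter (fun i : Fin (N+1) => (i : ℕ) < j), Fin.snoc t a i)
      = ∑ i ∈ Finset.univ.filter (fun i : Fin N => (i : ℕ) < j), t i := by
  rw [Finset.sum_filter, Finset.sum_filter, Fin.sum_univ_castSucc]
  have hN : ¬ ((Fin.last N : Fin (N+1)) : ℕ) < j := by simp; omega
  simp only [Fin.snoc_castSucc, Fin.coe_castSucc, Fin.snoc_last, if_neg hN, add_zero]

private def wEquiv (N : ℕ) (m : ℤ) (hm : 0 ≤ m) :
    Wset (N+1) m ≃ (Wset N (m-1) ⊕ Wset N (m+1)) where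
  toFun s :=
    if h : s.1 (Fin.last N) = 1 then
      Sum.inl ⟨Fin.init s.1, by
        refine ⟨fun j => s.2.1 _, ?_, ?_⟩
        · rw [sum_init, s.2.2.1, h]
        · intro j hj
          have := s.2.2.2 j (by omega)
          rwa [← Fin.snoc_init_self s.1, partial_snoc _ _ hj] at this⟩
    else
      Sum.inr ⟨Fin.init s.1, by
        have h' : s.1 (Fin.last N) = -1 := (s.2.1 (Fin.last N)).resolve_right h
        refine ⟨fun j => s.2.1 _, ?_, ?_⟩
        · rw [sum_init, s.2.2.1, h']; ring
        · intro j hj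
          have := s.2.2.2 j (by omega)
          rwa [← Fin.snoc_init_self s.1, partial_snoc _ _ hj] at this⟩
  invFun t :=
    match t with
    | Sum.inl t => ⟨Fin.snoc t.1 1, by
        refine ⟨?_, ?_, ?_⟩
        · intro j
          refine Fin.lastCases ?_ (fun i => ?_) j <;> simp [Fin.snoc_last, Fin.snoc_castSucc]
          exact t.2.1 i
        · rw [Fin.sum_univ_castSucc]
          simp only [Fin.snoc_castSucc, Fin.snoc_last]
          rw [t.2.2.1]; ring
        · intro j hj
          rcases Nat.lt_or_ge j (N+1) with hj' | hj'
          · rw [partial_snoc _ _ (by omega)]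
            exact t.2.2.2 j (by omega)
          · rw [filter_ge _ (by omega)]
            rw [show (∑ i : Fin (N+1), Fin.snoc t.1 (1:ℤ) i) = m from by
              rw [Fin.sum_univ_castSucc]
              simp only [Fin.snoc_castSucc, Fin.snoc_last]
              rw [t.2.2.1]; ring]
            exact hm⟩
    | Sum.inr t => ⟨Fin.snoc t.1 (-1), by
        refine ⟨?_, ?_, ?_⟩
        · intro j
          refine Fin.lastCases ?_ (fun i => ?_) j <;> simp [Fin.snoc_last, Fin.snoc_castSucc]
          exact t.2.1 i
        · rw [Fin.sum_univ_castSucc]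
          simp only [Fin.snoc_castSucc, Fin.snoc_last]
          rw [t.2.2.1]; ring
        · intro j hj
          rcases Nat.lt_or_ge j (N+1) with hj' | hj'
          · rw [partial_snoc _ _ (by omega)]
            exact t.2.2.2 j (by omega)
          · rw [filter_ge _ (by omega)]
            rw [show (∑ i : Fin (N+1), Fin.snoc t.1 (-1:ℤ) i) = m from by
              rw [Fin.sum_univ_castSucc]
              simp only [Fin.snoc_castSucc, Fin.snoc_last]
              rw [t.2.2.1]; ring]
            exact hm⟩
  left_inv s := by
    by_cases h : s.1 (Fin.last N) = 1
    · simp only [dif_pos h]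
      have hs := Fin.snoc_init_self s.1
      rw [h] at hs
      exact Subtype.ext hs
    · simp only [dif_neg h]
      have h' : s.1 (Fin.last N) = -1 := (s.2.1 (Fin.last N)).resolve_right h
      have hs := Fin.snoc_init_self s.1
      rw [h'] at hs
      exact Subtype.ext hs
  right_inv t := by
    rcases t with t | t
    · dsimp only
      split
      next h =>
        apply congrArg Sum.inl
        apply Subtype.ext
        exact Fin.init_snoc (α := fun _ : Fin (N+1) => ℤ) (1 : ℤ) t.1
      next h => exact absurd (Fin.snoc_last _ _) h
    · dsimp only
      split
      next h =>
        rw [Fin.snoc_last] at h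
        exact absurd h (by decide)
      next h =>
        apply congrArg Sum.inr
        apply Subtype.ext
        exact Fin.init_snoc (α := fun _ : Fin (N+1) => ℤ) (-1 : ℤ) t.1

private lemma card_rec (N : ℕ) (m : ℤ) (hm : 0 ≤ m) :
    Nat.card (Wset (N+1) m) = Nat.card (Wset N (m-1)) + Nat.card (Wset N (m+1)) := by
  rw [Nat.card_congr (wEquiv N m hm), Nat.card_sum]

private lemma card_neg (N : ℕ) (m : ℤ) (hm : m < 0) : Nat.card (Wset N m) = 0 := by
  have : IsEmpty (Wset N m) := by
    constructor
    intro s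
    have := s.2.2.2 N le_rfl
    rw [filter_ge _ le_rfl, s.2.2.1] at this
    omega
  exact Nat.card_of_isEmpty

private lemma closed (N : ℕ) : ∀ m : ℤ, -1 ≤ m → Even ((N : ℤ) + m) →
    (Nat.card (Wset N m) : ℤ)
      = N.choose (((N : ℤ) + m) / 2).toNat - N.choose ((((N : ℤ) + m) / 2).toNat + 1) := by
  induction N with
  | zero =>
    intro m hm he
    rcases eq_or_ne m 0 with rfl | hne
    · have hu : Unique (Wset 0 0) :=
        { default := ⟨fun i => i.elim0, fun j => j.elim0, by simp, fun j hj => by simp⟩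
          uniq := fun s => Subtype.ext (funext fun i => i.elim0) }
      rw [Nat.card_unique]
      simp
    · have h2 : 2 ≤ m := by
        obtain ⟨c, hc⟩ := he
        omega
      have : IsEmpty (Wset 0 m) := by
        constructor
        intro s
        have := s.2.2.1
        simp at this
        omega
      rw [Nat.card_of_isEmpty]
      rw [Nat.choose_eq_zero_of_lt (by omega), Nat.choose_eq_zero_of_lt (by omega)]
      simp
  | succ N ih =>
    intro m hm he
    rcases eq_or_lt_of_le hm with rfl | hm'
    · -- m = -1
      rw [card_neg _ _ (by omega)]
      have hNe : Even (N : ℤ) := by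
        obtain ⟨c, hc⟩ := he; exact ⟨c, by push_cast at hc ⊢; omega⟩
      obtain ⟨k, hk⟩ : ∃ k : ℕ, N = 2 * k := by
        obtain ⟨c, hc⟩ := hNe
        exact ⟨c.toNat, by omega⟩
      push_cast
      rw [show (((N : ℤ) + 1 + -1) / 2).toNat = k from by omega]
      have hsy := Nat.choose_symm (n := N + 1) (k := k) (by omega)
      rw [show N + 1 - k = k + 1 from by omega] at hsy
      omega
    · have hm0 : 0 ≤ m := by omega
      obtain ⟨j, hj1, hj2⟩ : ∃ j : ℕ, ((N : ℤ) + 1 + m) = 2 * j ∧ 1 ≤ j := by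
        obtain ⟨c, hc⟩ := he
        refine ⟨c.toNat, by push_cast at hc ⊢; omega, by push_cast at hc; omega⟩
      have h1 := ih (m - 1) (by omega) ⟨(j : ℤ) - 1, by omega⟩
      have h2 := ih (m + 1) (by omega) ⟨(j : ℤ), by omega⟩
      rw [card_rec N m hm0]
      rw [show (((N : ℤ) + (m - 1)) / 2).toNat = j - 1 from by omega] at h1
      rw [show (((N : ℤ) + (m + 1)) / 2).toNat = j from by omega] at h2
      push_cast
      rw [show (((N : ℤ) + 1 + m) / 2).toNat = j from by omega]
      obtain ⟨i, rfl⟩ : ∃ i, j = i + 1 := ⟨j - 1, by omega⟩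
      rw [Nat.choose_succ_succ N i, Nat.choose_succ_succ N (i+1)]
      simp only [Nat.add_sub_cancel] at h1
      simp only [Nat.succ_eq_add_one] at h1 h2 ⊢
      push_cast at h1 h2 ⊢
      omega

theorem walk_nonneg_count (N : ℕ) (m : ℤ) (hm0 : 0 ≤ m) (hmN : m ≤ (N : ℤ))
    (heven : Even ((N : ℤ) + m)) (μ : ℤ) (hμ : μ = ((N : ℤ) + m) / 2) :
    (Nat.card {s : Fin N → ℤ //
        (∀ j, s j = -1 ∨ s j = 1) ∧
        (∑ i, s i) = m ∧
        ∀ j ≤ N, 0 ≤ (∑ i ∈ Finset.univ.filter (fun i : Fin N => (i : ℕ) < j), s i)} : ℚ)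
      = ((m : ℚ) + 1) / ((μ : ℚ) + 1) * (Nat.choose N μ.toNat : ℚ) := by
  have hcl := closed N m (by omega) heven
  obtain ⟨c, hc⟩ := heven
  have h2μ : 2 * μ = (N : ℤ) + m := by omega
  have hμ0 : 0 ≤ μ := by omega
  have hkN : μ.toNat ≤ N := by omega
  rw [show (((N : ℤ) + m) / 2).toNat = μ.toNat from by omega] at hcl
  have hcl' : (Nat.card (Wset N m) : ℚ)
      = (N.choose μ.toNat : ℚ) - (N.choose (μ.toNat + 1) : ℚ) := by
    exact_mod_cast congrArg (fun x : ℤ => (x : ℚ)) hcl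
  show (Nat.card (Wset N m) : ℚ) = _
  rw [hcl']
  have hcc := Nat.choose_succ_right_eq N μ.toNat
  have hcc' : (N.choose (μ.toNat + 1) : ℚ) * ((μ.toNat : ℚ) + 1)
      = (N.choose μ.toNat : ℚ) * ((N : ℚ) - (μ.toNat : ℚ)) := by
    have h := congrArg (fun x : ℕ => (x : ℚ)) hcc
    push_cast [Nat.cast_sub hkN] at h
    linarith [h]
  have hμQ : ((μ.toNat : ℚ)) = (μ : ℚ) := by
    exact_mod_cast congrArg (fun x : ℤ => (x : ℚ)) (Int.toNat_of_nonneg hμ0)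
  have hmQ : (m : ℚ) = 2 * (μ : ℚ) - (N : ℚ) := by
    have h : m = 2 * μ - N := by omega
    exact_mod_cast congrArg (fun x : ℤ => (x : ℚ)) h
  have hμne : (μ : ℚ) + 1 ≠ 0 := by
    have : (0 : ℚ) ≤ (μ : ℚ) := by exact_mod_cast hμ0
    linarith
  rw [div_mul_eq_mul_div, eq_comm, div_eq_iff hμne, hmQ]
  rw [hμQ] at hcc'
  linarith [hcc']
end

section
/- Let N be a natural number and m an integer with 0 ≤ m ≤ N and N + m even, and set μ = (N+m)/2. Then the number of walks of length N from 0 to m all of whose partial sums are ≥ −1 equals ((m+2)(N+1) / ((μ+1)(μ+2))) · C(N, μ), where this quotient is an equality of rational numbers with the cardinality cast to ℚ. -/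
open Finset

private def stp (b : Bool) : ℤ := if b then 1 else -1

private def S (N : ℕ) (m : ℤ) : Finset (Fin N → Bool) :=
  univ.filter (fun t => (∑ i, stp (t i)) = m ∧
    ∀ j ≤ N, -1 ≤ ∑ i ∈ univ.filter (fun i : Fin N => (i : ℕ) < j), stp (t i))

private lemma mem_S {N : ℕ} {m : ℤ} {t : Fin N → Bool} : t ∈ S N m ↔
    (∑ i, stp (t i)) = m ∧
    ∀ j ≤ N, -1 ≤ ∑ i ∈ univ.filter (fun i : Fin N => (i : ℕ) < j), stp (t i) := by
  simp [S]

private lemma filter_all (N : ℕ) :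
    (univ.filter (fun i : Fin N => (i : ℕ) < N)) = (univ : Finset (Fin N)) := by
  apply Finset.filter_true_of_mem
  intro i _
  exact i.is_lt

private lemma S_nonneg {N : ℕ} {m : ℤ} (h : (S N m).Nonempty) : -1 ≤ m := by
  obtain ⟨t, ht⟩ := h
  rw [mem_S] at ht
  have := ht.2 N le_rfl
  rw [filter_all, ht.1] at this
  exact this

private lemma S_empty {N : ℕ} {m : ℤ} (h : m < -1) : (S N m).card = 0 := by
  rw [Finset.card_eq_zero]
  by_contra hne
  have := S_nonneg (Finset.nonempty_of_ne_empty hne)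
  omega

private lemma pos_castSucc {N : ℕ} (t : Fin (N+1) → Bool) {j : ℕ} (hj : j ≤ N) :
    ∑ i ∈ univ.filter (fun i : Fin (N+1) => (i : ℕ) < j), stp (t i)
      = ∑ i ∈ univ.filter (fun i : Fin N => (i : ℕ) < j), stp (Fin.init t i) := by
  rw [Finset.sum_filter, Finset.sum_filter, Fin.sum_univ_castSucc
    (f := fun i : Fin (N+1) => if (i : ℕ) < j then stp (t i) else 0)]
  have hlast : ¬ ((Fin.last N : ℕ) < j) := by simp [Fin.val_last]; omega
  rw [if_neg hlast, add_zero]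
  apply Finset.sum_congr rfl
  intro i _
  simp [Fin.init, Fin.coe_castSucc]

private lemma sum_snoc {N : ℕ} (t : Fin N → Bool) (b : Bool) :
    (∑ i : Fin (N+1), stp ((Fin.snoc t b : Fin (N+1) → Bool) i))
      = (∑ i, stp (t i)) + stp b := by
  rw [Fin.sum_univ_castSucc
    (f := fun i : Fin (N+1) => stp ((Fin.snoc t b : Fin (N+1) → Bool) i))]
  simp [Fin.snoc_castSucc, Fin.snoc_last]

private lemma S_card_succ (N : ℕ) (m : ℤ) (hm : -1 ≤ m) :
    (S (N+1) m).card = (S N (m-1)).card + (S N (m+1)).card := by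
  have hdisj : Disjoint (S N (m-1)) (S N (m+1)) := by
    rw [Finset.disjoint_left]
    intro t h1 h2
    rw [mem_S] at h1 h2
    have := h1.1
    rw [h2.1] at this
    omega
  rw [← Finset.card_union_of_disjoint hdisj]
  refine Finset.card_bij' (fun t _ => Fin.init t)
    (fun t _ => (Fin.snoc t (if (∑ i, stp (t i)) = m - 1 then true else false) :
      Fin (N+1) → Bool)) ?hi ?hj ?hleft ?hright
  case hi =>
    intro t ht
    rw [mem_S] at ht
    have hsum : (∑ i, stp (Fin.init t i)) = m - stp (t (Fin.last N)) := by
      have h1 := ht.1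
      rw [Fin.sum_univ_castSucc (f := fun i => stp (t i))] at h1
      have hinit : ∀ i : Fin N, stp (Fin.init t i) = stp (t i.castSucc) := fun i => rfl
      rw [Finset.sum_congr rfl (fun i _ => hinit i)]
      omega
    have hpre : ∀ j ≤ N, -1 ≤ ∑ i ∈ univ.filter (fun i : Fin N => (i : ℕ) < j),
        stp (Fin.init t i) := by
      intro j hj
      rw [← pos_castSucc t hj]
      exact ht.2 j (by omega)
    rw [Finset.mem_union, mem_S, mem_S]
    cases hb : t (Fin.last N) with
    | false =>
      right
      refine ⟨?_, hpre⟩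
      rw [hsum, hb]; simp [stp]
    | true =>
      left
      refine ⟨?_, hpre⟩
      rw [hsum, hb]; simp [stp]
  case hj =>
    intro t ht
    rw [Finset.mem_union, mem_S, mem_S] at ht
    set b := (if (∑ i, stp (t i)) = m - 1 then true else false) with hbdef
    have hsum : (∑ i : Fin (N+1), stp ((Fin.snoc t b : Fin (N+1) → Bool) i)) = m := by
      rcases ht with h | h
      · have hb : b = true := by rw [hbdef, if_pos h.1]
        rw [sum_snoc, h.1, hb]; simp [stp]
      · have hb : b = false := by
          rw [hbdef, if_neg]; rw [h.1]; omega
        rw [sum_snoc, h.1, hb]; simp [stp]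
    rw [mem_S]
    refine ⟨hsum, ?_⟩
    intro j hj
    rcases Nat.lt_or_ge j (N+1) with hjN | hjN
    · have hjN' : j ≤ N := by omega
      rw [pos_castSucc _ hjN', Fin.init_snoc]
      rcases ht with h | h
      · exact h.2 j hjN'
      · exact h.2 j hjN'
    · have hj1 : j = N + 1 := by omega
      subst hj1
      rw [filter_all, hsum]
      exact hm
  case hleft =>
    intro t ht
    rw [mem_S] at ht
    have hsum : (∑ i, stp (Fin.init t i)) = m - stp (t (Fin.last N)) := by
      have h1 := ht.1
      rw [Fin.sum_univ_castSucc (f := fun i => stp (t i))] at h1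
      have hinit : ∀ i : Fin N, stp (Fin.init t i) = stp (t i.castSucc) := fun i => rfl
      rw [Finset.sum_congr rfl (fun i _ => hinit i)]
      omega
    have hb : (if (∑ i, stp (Fin.init t i)) = m - 1 then true else false)
        = t (Fin.last N) := by
      cases hlast : t (Fin.last N) with
      | true =>
        rw [if_pos]
        rw [hsum, hlast]; simp [stp]
      | false =>
        rw [if_neg]
        rw [hsum, hlast]; simp [stp]; omega
    show (Fin.snoc (Fin.init t)
      (if (∑ i, stp (Fin.init t i)) = m - 1 then true else false) : Fin (N+1) → Bool) = t
    rw [hb]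
    exact Fin.snoc_init_self t
  case hright =>
    intro t _
    exact Fin.init_snoc _ _

private lemma key_s12 : ∀ (N k : ℕ), (N : ℤ) ≤ 2*k + 1 →
    ((S N (2*(k:ℤ) - N)).card : ℤ) = Nat.choose N k - Nat.choose N (k+2) := by
  intro N
  induction N with
  | zero =>
    intro k _
    simp only [Nat.cast_zero, sub_zero]
    rcases Nat.eq_zero_or_pos k with hk | hk
    · subst hk
      have h1 : S 0 (2*((0:ℕ):ℤ)) = (univ : Finset (Fin 0 → Bool)) := by
        ext t
        simp [S]
      rw [h1]
      simp
    · have h1 : S 0 (2*(k:ℤ)) = (∅ : Finset (Fin 0 → Bool)) := by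
        ext t
        simp only [mem_S, Finset.notMem_empty, iff_false]
        intro h
        have h2 := h.1
        simp at h2
        omega
      rw [h1]
      have h2 : Nat.choose 0 k = 0 := Nat.choose_eq_zero_of_lt (by omega)
      have h3 : Nat.choose 0 (k+2) = 0 := Nat.choose_eq_zero_of_lt (by omega)
      simp [h2, h3]
  | succ N ih =>
    intro k hk
    rcases Nat.lt_or_ge (2*k) (N+1) with h2 | h2
    · -- N = 2k, ending value -1
      have hN : N = 2*k := by omega
      have hm : 2*(k:ℤ) - ((N+1 : ℕ) : ℤ) = -1 := by push_cast; omega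
      rw [hm, S_card_succ N (-1) le_rfl]
      have hempty : (S N (-1 - 1)).card = 0 := S_empty (by norm_num)
      have h0 : (-1 : ℤ) + 1 = 2*(k:ℤ) - (N:ℤ) := by push_cast; omega
      rw [hempty, h0, zero_add, ih k (by omega)]
      rcases Nat.eq_zero_or_pos k with hk0 | hk0
      · subst hk0
        simp at hN
        subst hN
        norm_num [Nat.choose]
      · obtain ⟨j, rfl⟩ : ∃ j, k = j + 1 := ⟨k - 1, by omega⟩
        have hsym : Nat.choose N j = Nat.choose N (j+2) := by
          have hj2 : N - (j+2) = j := by omega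
          calc Nat.choose N j = Nat.choose N (N - (j+2)) := by rw [hj2]
          _ = Nat.choose N (j+2) := Nat.choose_symm (by omega)
        have p1 : Nat.choose (N+1) (j+1) = Nat.choose N j + Nat.choose N (j+1) :=
          Nat.choose_succ_succ N j
        have p2 : Nat.choose (N+1) (j+1+2) = Nat.choose N (j+2) + Nat.choose N (j+3) :=
          Nat.choose_succ_succ N (j+2)
        rw [p1, p2, hsym]
        push_cast
        ring
    · -- ending value ≥ 0
      obtain ⟨j, rfl⟩ : ∃ j, k = j + 1 := ⟨k - 1, by omega⟩
      have hm : (-1:ℤ) ≤ 2*(((j+1:ℕ)):ℤ) - ((N+1:ℕ):ℤ) := by push_cast; omega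
      have e1 : (2*(((j+1:ℕ)):ℤ) - ((N+1:ℕ):ℤ)) - 1 = 2*((j:ℕ):ℤ) - (N:ℤ) := by
        push_cast; ring
      have e2 : (2*(((j+1:ℕ)):ℤ) - ((N+1:ℕ):ℤ)) + 1 = 2*(((j+1:ℕ)):ℤ) - (N:ℤ) := by
        push_cast; ring
      rw [S_card_succ N _ hm, e1, e2, Nat.cast_add, ih j (by omega), ih (j+1) (by omega)]
      have p1 : Nat.choose (N+1) (j+1) = Nat.choose N j + Nat.choose N (j+1) :=
        Nat.choose_succ_succ N j
      have p2 : Nat.choose (N+1) (j+1+2) = Nat.choose N (j+2) + Nat.choose N (j+3) :=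
        Nat.choose_succ_succ N (j+2)
      rw [p1, p2]
      push_cast
      ring

private lemma card_bridge (N : ℕ) (m : ℤ) :
    Nat.card {s : Fin N → ℤ //
        (∀ j, s j = -1 ∨ s j = 1) ∧
        (∑ i, s i) = m ∧
        ∀ j ≤ N, -1 ≤ (∑ i ∈ Finset.univ.filter (fun i : Fin N => (i : ℕ) < j), s i)}
      = (S N m).card := by
  rw [← Nat.card_eq_finsetCard]
  apply Nat.card_congr
  refine ⟨fun s => ⟨fun i => decide (s.1 i = 1), ?_⟩,
    fun t => ⟨fun i => stp (t.1 i), ?_⟩, ?_, ?_⟩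
  · obtain ⟨s, hs1, hs2, hs3⟩ := s
    have hpt : ∀ i, stp (decide (s i = 1)) = s i := by
      intro i
      rcases hs1 i with h | h <;> simp [h, stp]
    rw [mem_S]
    constructor
    · rw [Finset.sum_congr rfl (fun i _ => hpt i)]; exact hs2
    · intro j hj
      rw [Finset.sum_congr rfl (fun i _ => hpt i)]
      exact hs3 j hj
  · obtain ⟨t, ht⟩ := t
    rw [mem_S] at ht
    refine ⟨fun i => ?_, ht.1, ht.2⟩
    cases t i <;> simp [stp]
  · intro s
    obtain ⟨s, hs1, _, _⟩ := s
    ext i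
    rcases hs1 i with h | h <;> simp [h, stp]
  · intro t
    obtain ⟨t, _⟩ := t
    ext i
    cases t i <;> simp [stp]

theorem walk_ge_neg_one_count (N : ℕ) (m : ℤ) (hm0 : 0 ≤ m) (hmN : m ≤ (N : ℤ))
    (heven : Even ((N : ℤ) + m)) (μ : ℤ) (hμ : μ = ((N : ℤ) + m) / 2) :
    (Nat.card {s : Fin N → ℤ //
        (∀ j, s j = -1 ∨ s j = 1) ∧
        (∑ i, s i) = m ∧
        ∀ j ≤ N, -1 ≤ (∑ i ∈ Finset.univ.filter (fun i : Fin N => (i : ℕ) < j), s i)} : ℚ)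
      = ((m : ℚ) + 2) * ((N : ℚ) + 1) / (((μ : ℚ) + 1) * ((μ : ℚ) + 2)) *
          (Nat.choose N μ.toNat : ℚ) := by
  obtain ⟨a, ha⟩ := heven
  have h2μ : 2 * μ = (N : ℤ) + m := by omega
  have hμ0 : 0 ≤ μ := by omega
  have hμN : μ ≤ (N : ℤ) := by omega
  obtain ⟨k, hkμ⟩ : ∃ k : ℕ, (k : ℤ) = μ := ⟨μ.toNat, Int.toNat_of_nonneg hμ0⟩
  have hμt : μ.toNat = k := by omega
  have hkN : k ≤ N := by omega
  have hmk : m = 2*(k:ℤ) - N := by omega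
  have hcard : ((S N m).card : ℤ) = Nat.choose N k - Nat.choose N (k+2) := by
    rw [hmk]
    exact key_s12 N k (by omega)
  have hcardQ : ((S N m).card : ℚ)
      = (Nat.choose N k : ℚ) - (Nat.choose N (k+2) : ℚ) := by
    exact_mod_cast hcard
  have hμQ : ((μ : ℚ)) = (k : ℚ) := by exact_mod_cast hkμ.symm
  have h2Q : 2 * (k : ℚ) = (N : ℚ) + (m : ℚ) := by
    have : 2 * (k:ℤ) = (N : ℤ) + m := by omega
    exact_mod_cast this
  have idA : (Nat.choose N (k+1) : ℚ) * ((k:ℚ)+1)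
      = (Nat.choose N k : ℚ) * ((N:ℚ) - (k:ℚ)) := by
    have h := Nat.choose_succ_right_eq N k
    have hc : ((N - k : ℕ) : ℚ) = (N : ℚ) - (k : ℚ) := by
      have : ((N - k : ℕ) : ℤ) = (N : ℤ) - (k : ℤ) := by omega
      exact_mod_cast this
    rw [← hc]
    exact_mod_cast h
  have hC2 : (Nat.choose N (k+2) : ℚ) * (((k:ℚ)+1) * ((k:ℚ)+2))
      = (Nat.choose N k : ℚ) * (((N:ℚ) - (k:ℚ)) * ((N:ℚ) - (k:ℚ) - 1)) := by
    rcases Nat.lt_or_ge k N with hlt | hge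
    · have idB : (Nat.choose N (k+2) : ℚ) * ((k:ℚ)+2)
          = (Nat.choose N (k+1) : ℚ) * ((N:ℚ) - (k:ℚ) - 1) := by
        have h := Nat.choose_succ_right_eq N (k+1)
        have hc : ((N - (k+1) : ℕ) : ℚ) = (N : ℚ) - (k : ℚ) - 1 := by
          have : ((N - (k+1) : ℕ) : ℤ) = (N : ℤ) - (k : ℤ) - 1 := by omega
          exact_mod_cast this
        rw [← hc]
        exact_mod_cast h
      linear_combination ((k:ℚ)+1) * idB + ((N:ℚ)-(k:ℚ)-1) * idA
    · have hkN' : k = N := le_antisymm hkN hge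
      have c1 : Nat.choose N (k+2) = 0 := Nat.choose_eq_zero_of_lt (by omega)
      have hNQ : ((N:ℚ)) = (k:ℚ) := by exact_mod_cast congrArg (Nat.cast (R := ℚ)) hkN'.symm
      rw [c1, hNQ]
      push_cast
      ring
  have hD : (((μ:ℚ)+1) * ((μ:ℚ)+2)) ≠ 0 := by
    rw [hμQ]
    positivity
  rw [card_bridge N m, hμt, hμQ, div_mul_eq_mul_div, eq_div_iff (by rw [hμQ] at hD; exact hD)]
  linear_combination (((k:ℚ)+1)*((k:ℚ)+2)) * hcardQ - hC2
    + (Nat.choose N k : ℚ) * ((N:ℚ)+1) * h2Q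
end
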